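/- arXiv:1411.1936 — 5 statements merged into one kernel-verified Lean document; each statement's English description precedes it below -/
import Mathlib

section
/- Let n ≥ 2, let 0 < r₁ < … < r_n, and let ν₁, …, ν_n be real values. Let λ̂₂, …, λ̂_n be the unique solution of the linear system Σ_{j=2}^n λ_j·H_{0,∞}(r_k, r_j) = ν_k − ν₁ for k = 2, …, n. Then the function s_{0,∞}(r) := ν₁ + Σ_{j=2}^n λ̂_j·H_{0,∞}(r, r_j) coincides on (0,∞) with σ^B, the unique non-singular Beppo Levi L₀-spline on ρ = {r₁,…,r_n} satisfying σ^B(r_j) = ν_j for all j ∈ {1,…,n}. (Consequently σ^B is the pointwise limit, as R₁ → 0 and R₂ → ∞, of Rabut's minimizer on [R₁,R₂] interpolating the same data.) -/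
open MeasureTheory Set Filter

noncomputable section

/-- The radial Beppo Levi energy space `Λ₀`: functions `f : (0,∞) → ℂ` of class `C¹`
whose derivative `f′` is locally absolutely continuous on compact subintervals of `(0,∞)`
(encoded by the fundamental theorem of calculus with an integrable density `f″`),
and whose radial Beppo Levi energy `∫₀^∞ ( r·|f″(r)|² + (1/r)·|f′(r)|² ) dr` is finite. -/
structure Lambda0 where
  f : ℝ → ℂ
  f' : ℝ → ℂ
  f'' : ℝ → ℂ
  hasDeriv : ∀ r ∈ Set.Ioi (0:ℝ), HasDerivAt f (f' r) r
  contDeriv : ContinuousOn f' (Set.Ioi 0)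
  locAC : ∀ a b : ℝ, 0 < a → a ≤ b →
    MeasureTheory.IntegrableOn f'' (Set.Icc a b) ∧
      ∀ x ∈ Set.Icc a b, f' x = f' a + ∫ t in a..x, f'' t
  energyFin : MeasureTheory.IntegrableOn
    (fun r : ℝ => r * ‖f'' r‖ ^ 2 + (1 / r) * ‖f' r‖ ^ 2) (Set.Ioi 0)

/-- The squared radial Beppo Levi energy `‖·‖₀²` of a function with first derivative `g'`
and second derivative `g''`. -/
def energySq (g' g'' : ℝ → ℂ) : ℝ :=
  ∫ r in Set.Ioi (0:ℝ), (r * ‖g'' r‖ ^ 2 + (1 / r) * ‖g' r‖ ^ 2)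

/-- The seminorm `‖f‖₀`. -/
def Lambda0.seminorm0 (F : Lambda0) : ℝ :=
  Real.sqrt (energySq F.f' F.f'')

/-- The semi-inner product `⟨f,g⟩₀`. -/
def innerBL (F G : Lambda0) : ℂ :=
  ∫ r in Set.Ioi (0:ℝ),
    ((r : ℂ) * F.f'' r * (starRingEnd ℂ) (G.f'' r) +
      (1 / (r : ℂ)) * F.f' r * (starRingEnd ℂ) (G.f' r))

/-- A Beppo Levi `L₀`-spline on the positive knots `r 1 < r 2 < … < r n`:
piecewise of the form `a·x² + b·x²·ln x + c + d·ln x` between consecutive knots,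
of the form `a·x² + b·x²·ln x + c` on `(0, r 1)`, of the form `c + d·ln x` on `(r n, ∞)`,
`C²` throughout `(0,∞)`, and continuously extended at `0`. -/
structure IsBLSpline (n : ℕ) (r : ℕ → ℝ) (η : ℝ → ℂ) : Prop where
  pieces : ∀ j : ℕ, 1 ≤ j → j + 1 ≤ n → ∃ a b c d : ℂ,
    ∀ x ∈ Set.Ioo (r j) (r (j + 1)),
      η x = a * (x : ℂ) ^ 2 + b * (x : ℂ) ^ 2 * (Real.log x : ℂ) + c + d * (Real.log x : ℂ)
  left : ∃ a b c : ℂ, ∀ x ∈ Set.Ioo (0 : ℝ) (r 1),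
      η x = a * (x : ℂ) ^ 2 + b * (x : ℂ) ^ 2 * (Real.log x : ℂ) + c
  right : ∃ c d : ℂ, ∀ x ∈ Set.Ioi (r n), η x = c + d * (Real.log x : ℂ)
  smooth : ContDiffOn ℝ 2 η (Set.Ioi 0)
  cont0 : ContinuousWithinAt η (Set.Ici 0) 0

/-- A Beppo Levi `L₀`-spline is non-singular if on `(0, r₁)` it has the form `a·x² + c`. -/
def NonSingularBLS (r1 : ℝ) (η : ℝ → ℂ) : Prop :=
  ∃ a c : ℂ, ∀ x ∈ Set.Ioo (0 : ℝ) r1, η x = a * (x : ℂ) ^ 2 + c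

/-- Rabut's kernel `K`. -/
def Kfun (r t : ℝ) : ℝ :=
  if r ≤ t then 0 else (1 / 4) * (t ^ 2 - r ^ 2 + (r ^ 2 + t ^ 2) * Real.log (r / t))

/-- The limiting kernel `H_{0,∞}` (with left endpoint knot `r1`). -/
def Hfun (r1 r t : ℝ) : ℝ :=
  Kfun r t - Kfun r r1 - Kfun r1 t + (1 / 4) * (r ^ 2 - r1 ^ 2) * Real.log (t / r1)

/-- The basis function `φ₀`. -/
def phi0 (r : ℝ) : ℝ :=
  if r ≤ 1 then r ^ 2 - r ^ 2 * Real.log r else 1 + Real.log r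

/-- Johnson's compactly supported profile `η₂`. -/
def eta2 (x : ℝ) : ℂ :=
  (((4 / 3 : ℝ) * (Real.log 2 - phi0 x + phi0 (x / 2)) : ℝ) : ℂ)

/-- The non-singular compactly supported profile `β`. -/
def betaFn (x : ℝ) : ℂ :=
  (((1 / 5 : ℝ) * (27 * Real.log 3 - 32 * Real.log 2 + 5 * phi0 x
      - 32 * phi0 (x / 2) + 27 * phi0 (x / 3)) : ℝ) : ℂ)

/-- `Ker L₀ = span{r², r² ln r, 1, ln r}`, as functions on `(0,∞)`. -/
def KerL0 : Set (ℝ → ℂ) :=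
  {η | ∃ a b c d : ℂ, ∀ x : ℝ, 0 < x →
    η x = a * (x : ℂ) ^ 2 + b * (x : ℂ) ^ 2 * (Real.log x : ℂ) + c + d * (Real.log x : ℂ)}

/-- `α(h) = inf_{η ∈ Ker L₀} sup_{t ∈ [0,1]} |t^μ − η(1+th)|`. -/
def alphaFn (μ h : ℝ) : ℝ :=
  sInf {v : ℝ | ∃ η ∈ KerL0,
    v = sSup ((fun t : ℝ => ‖((t ^ μ : ℝ) : ℂ) - η (1 + t * h)‖) '' Set.Icc (0 : ℝ) 1)}


open Complex Topology

/-! ### Auxiliary development for stmt9 -/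

def BLe (a b c d : ℂ) (x : ℝ) : ℂ :=
  a * (x:ℂ)^2 + b * (x:ℂ)^2 * (Real.log x : ℂ) + c + d * (Real.log x : ℂ)
def BLe1 (a b c d : ℂ) (x : ℝ) : ℂ :=
  2*a*(x:ℂ) + b*(2*(x:ℂ)*(Real.log x : ℂ) + (x:ℂ)) + d/(x:ℂ)
def BLe2 (a b c d : ℂ) (x : ℝ) : ℂ :=
  2*a + b*(2*(Real.log x : ℂ) + 3) - d/(x:ℂ)^2
def BLe3 (b d : ℂ) (x : ℝ) : ℂ := 2*b/(x:ℂ) + 2*d/(x:ℂ)^3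
def Gg (a b c d : ℂ) (x : ℝ) : ℝ :=
  ((x:ℂ) * BLe2 a b c d x * (starRingEnd ℂ) (BLe1 a b c d x)).re
    - 4 * (b * (starRingEnd ℂ) (BLe a b c d x)).re
def RLe (a b c d x : ℝ) : ℝ := a*x^2 + b*x^2*Real.log x + c + d*Real.log x
def RLe1 (a b c d x : ℝ) : ℝ := 2*a*x + b*(2*x*Real.log x + x) + d/x
def RLe2 (a b c d x : ℝ) : ℝ := 2*a + b*(2*Real.log x + 3) - d/x^2
def fa (t : ℝ) : ℝ := (-1 - Real.log t)/4
def fb (_ : ℝ) : ℝ := 1/4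
def fc (t : ℝ) : ℝ := t^2*(1 - Real.log t)/4
def fd (t : ℝ) : ℝ := t^2/4

lemma hasDerivAt_ofReal (x : ℝ) : HasDerivAt (fun y : ℝ => (y:ℂ)) 1 x := by
  simpa using (hasDerivAt_id x).ofReal_comp

lemma hasDerivAt_clog (x : ℝ) (hx : 0 < x) :
    HasDerivAt (fun y : ℝ => ((Real.log y : ℝ) : ℂ)) ((x:ℂ)⁻¹) x := by
  have := (Real.hasDerivAt_log hx.ne').ofReal_comp
  simpa using this

lemma hasDerivAt_sqC (x : ℝ) : HasDerivAt (fun y : ℝ => (y:ℂ)^2) (2*(x:ℂ)) x := by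
  have : HasDerivAt (fun y : ℝ => (y:ℂ) * (y:ℂ)) (1*(x:ℂ) + (x:ℂ)*1) x :=
    (hasDerivAt_ofReal x).mul (hasDerivAt_ofReal x)
  convert this using 1
  · funext y; ring
  · ring

lemma hasDerivAt_BLe (a b c d : ℂ) (x : ℝ) (hx : 0 < x) :
    HasDerivAt (BLe a b c d) (BLe1 a b c d x) x := by
  have hx0 : (x:ℂ) ≠ 0 := by exact_mod_cast hx.ne'
  have h2 : HasDerivAt (fun y : ℝ => (y:ℂ)^2 * (Real.log y : ℂ))
      (2*(x:ℂ)*(Real.log x : ℂ) + (x:ℂ)) x := by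
    have h := (hasDerivAt_sqC x).mul (hasDerivAt_clog x hx)
    have he : (x:ℂ)^2*((x:ℂ))⁻¹ = (x:ℂ) := by
      rw [sq, mul_assoc, mul_inv_cancel₀ hx0, mul_one]
    rw [he] at h; exact h
  have h3 : HasDerivAt (fun y : ℝ => a * (y:ℂ)^2 + b * ((y:ℂ)^2 * (Real.log y : ℂ)) + c
      + d * (Real.log y : ℂ)) (a * (2*(x:ℂ)) + b * (2*(x:ℂ)*(Real.log x : ℂ) + (x:ℂ)) + 0
      + d * (x:ℂ)⁻¹) x :=
    ((((hasDerivAt_sqC x).const_mul a).add (h2.const_mul b)).add (hasDerivAt_const x c)).add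
      ((hasDerivAt_clog x hx).const_mul d)
  have hfun : (fun y : ℝ => a*(y:ℂ)^2 + b*((y:ℂ)^2*(Real.log y:ℂ)) + c + d*(Real.log y:ℂ))
      = BLe a b c d := by funext y; unfold BLe; ring
  rw [hfun] at h3
  convert h3 using 1
  unfold BLe1; rw [div_eq_mul_inv]; ring

lemma hasDerivAt_BLe1 (a b c d : ℂ) (x : ℝ) (hx : 0 < x) :
    HasDerivAt (BLe1 a b c d) (BLe2 a b c d x) x := by
  have hx0 : (x:ℂ) ≠ 0 := by exact_mod_cast hx.ne'
  have h1 : HasDerivAt (fun y : ℝ => 2*a*(y:ℂ)) (2*a) x := by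
    simpa using (hasDerivAt_ofReal x).const_mul (2*a)
  have hm : HasDerivAt (fun y : ℝ => 2*(y:ℂ)*(Real.log y : ℂ))
      (2*(Real.log x : ℂ) + 2) x := by
    have h : HasDerivAt (fun y : ℝ => (2*(y:ℂ))*(Real.log y:ℂ))
        ((2*1)*(Real.log x:ℂ) + (2*(x:ℂ))*(x:ℂ)⁻¹) x :=
      ((hasDerivAt_ofReal x).const_mul 2).mul (hasDerivAt_clog x hx)
    have hfun : (fun y : ℝ => 2*(y:ℂ)*(Real.log y:ℂ))
        = fun y : ℝ => (2*(y:ℂ))*(Real.log y:ℂ) := by funext y; ring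
    rw [hfun]
    convert h using 1
    rw [mul_assoc 2 (x:ℂ), mul_inv_cancel₀ hx0]; ring
  have h2 : HasDerivAt (fun y : ℝ => 2*(y:ℂ)*(Real.log y : ℂ) + (y:ℂ))
      (2*(Real.log x : ℂ) + 2 + 1) x := hm.add (hasDerivAt_ofReal x)
  have h3 : HasDerivAt (fun y : ℝ => d/(y:ℂ)) (-(d/(x:ℂ)^2)) x := by
    have h : HasDerivAt (fun y : ℝ => d/(y:ℂ)) ((0 * (x:ℂ) - d * 1) / (x:ℂ) ^ 2) x :=
      (hasDerivAt_const x d).div (hasDerivAt_ofReal x) (by simpa using hx0)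
    convert h using 1
    rw [div_eq_mul_inv, div_eq_mul_inv]; ring
  have h4 : HasDerivAt (fun y : ℝ => 2*a*(y:ℂ) + b*(2*(y:ℂ)*(Real.log y:ℂ) + (y:ℂ)) + d/(y:ℂ))
      (2 * a + b * (2 * (Real.log x:ℂ) + 2 + 1) + -(d / (x:ℂ) ^ 2)) x :=
    (h1.add (h2.const_mul b)).add h3
  have hfun : (fun y : ℝ => 2*a*(y:ℂ) + b*(2*(y:ℂ)*(Real.log y:ℂ) + (y:ℂ)) + d/(y:ℂ))
      = BLe1 a b c d := by funext y; unfold BLe1; ring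
  rw [hfun] at h4
  convert h4 using 1
  unfold BLe2; rw [div_eq_mul_inv]; ring

lemma continuousAt_BLe2 (a b c d : ℂ) (x : ℝ) (hx : 0 < x) :
    ContinuousAt (BLe2 a b c d) x := by
  have hlog : ContinuousAt (fun y : ℝ => ((Real.log y : ℝ):ℂ)) x :=
    Complex.continuous_ofReal.continuousAt.comp (Real.continuousAt_log hx.ne')
  have hsq : ContinuousAt (fun y : ℝ => ((y:ℂ))^2) x :=
    (Complex.continuous_ofReal.continuousAt.pow 2)
  have hx0 : ((x:ℂ))^2 ≠ 0 := by
    simp [pow_eq_zero_iff]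
    exact_mod_cast hx.ne'
  unfold BLe2
  exact (continuousAt_const.add (continuousAt_const.mul
    ((continuousAt_const.mul hlog).add continuousAt_const))).sub
    (continuousAt_const.div hsq hx0)

lemma hasDerivAt_BLe2 (a b c d : ℂ) (x : ℝ) (hx : 0 < x) :
    HasDerivAt (BLe2 a b c d) (BLe3 b d x) x := by
  have hx0 : (x:ℂ) ≠ 0 := by exact_mod_cast hx.ne'
  have h1 : HasDerivAt (fun y : ℝ => 2*a + b*(2*(Real.log y : ℂ) + 3)) (b*(2*(x:ℂ)⁻¹)) x := by
    have h0 : HasDerivAt (fun y : ℝ => 2*a + b*(2*(Real.log y : ℂ) + 3))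
        (0 + b*(2*(x:ℂ)⁻¹ + 0)) x :=
      (hasDerivAt_const x (2*a)).add ((((hasDerivAt_clog x hx).const_mul 2).add
      (hasDerivAt_const x 3)).const_mul b)
    simpa using h0
  have hsq : HasDerivAt (fun y : ℝ => ((y:ℂ))^2) (2*(x:ℂ)) x := by
    have : HasDerivAt (fun y : ℝ => (y:ℂ) * (y:ℂ)) (1*(x:ℂ) + (x:ℂ)*1) x :=
      (hasDerivAt_ofReal x).mul (hasDerivAt_ofReal x)
    have hf : (fun y : ℝ => ((y:ℂ))^2) = fun y : ℝ => (y:ℂ)*(y:ℂ) := by funext y; ring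
    rw [hf]; convert this using 1; ring
  have h2 : HasDerivAt (fun y : ℝ => d/((y:ℂ))^2) ((0*(x:ℂ)^2 - d*(2*(x:ℂ)))/((x:ℂ)^2)^2) x :=
    (hasDerivAt_const x d).div hsq (pow_ne_zero 2 hx0)
  have h : HasDerivAt (fun y : ℝ => 2*a + b*(2*(Real.log y : ℂ) + 3) - d/((y:ℂ))^2)
      (b*(2*(x:ℂ)⁻¹) - (0*(x:ℂ)^2 - d*(2*(x:ℂ)))/((x:ℂ)^2)^2) x := h1.sub h2
  have hf : (fun y : ℝ => 2*a + b*(2*(Real.log y : ℂ) + 3) - d/((y:ℂ))^2) = BLe2 a b c d := by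
    funext y; unfold BLe2; ring
  rw [hf] at h
  convert h using 1
  unfold BLe3
  field_simp
  ring

lemma HasDerivAt.creal {f : ℝ → ℂ} {f' : ℂ} {x : ℝ} (h : HasDerivAt f f' x) :
    HasDerivAt (fun y => (f y).re) f'.re x := by
  exact (Complex.reCLM.hasFDerivAt.comp_hasDerivAt x h :)

lemma HasDerivAt.cconj {f : ℝ → ℂ} {f' : ℂ} {x : ℝ} (h : HasDerivAt f f' x) :
    HasDerivAt (fun y => (starRingEnd ℂ) (f y)) ((starRingEnd ℂ) f') x := by
  exact h.star

lemma norm_sq_eq (z : ℂ) : (‖z‖:ℝ)^2 = Complex.normSq z := by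
  rw [Complex.sq_norm]

lemma hasDerivAt_Gg (a b c d : ℂ) (x : ℝ) (hx : 0 < x) :
    HasDerivAt (Gg a b c d)
      (x * ‖BLe2 a b c d x‖^2 + ‖BLe1 a b c d x‖^2 / x) x := by
  have hx0 : (x:ℂ) ≠ 0 := by exact_mod_cast hx.ne'
  set B0 := BLe a b c d x
  set B1 := BLe1 a b c d x
  set B2 := BLe2 a b c d x
  set B3 := BLe3 b d x
  have hprod : HasDerivAt (fun y : ℝ => (y:ℂ) * BLe2 a b c d y * (starRingEnd ℂ) (BLe1 a b c d y))
      ((1*B2 + (x:ℂ)*B3) * (starRingEnd ℂ) B1 + (x:ℂ)*B2 * (starRingEnd ℂ) B2) x := by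
    exact (((hasDerivAt_ofReal x).mul (hasDerivAt_BLe2 a b c d x hx)).mul
      ((hasDerivAt_BLe1 a b c d x hx).cconj))
  have hsecond : HasDerivAt (fun y : ℝ => 4 * (b * (starRingEnd ℂ) (BLe a b c d y)).re)
      (4 * (b * (starRingEnd ℂ) B1).re) x :=
    (((hasDerivAt_BLe a b c d x hx).cconj.const_mul b).creal).const_mul 4
  have h : HasDerivAt (fun y : ℝ => ((y:ℂ) * BLe2 a b c d y * (starRingEnd ℂ) (BLe1 a b c d y)).re
      - 4 * (b * (starRingEnd ℂ) (BLe a b c d y)).re)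
      (((1*B2 + (x:ℂ)*B3) * (starRingEnd ℂ) B1 + (x:ℂ)*B2 * (starRingEnd ℂ) B2).re
        - 4 * (b * (starRingEnd ℂ) B1).re) x := (hprod.creal).sub hsecond
  have hGg : (fun y : ℝ => ((y:ℂ) * BLe2 a b c d y * (starRingEnd ℂ) (BLe1 a b c d y)).re
      - 4 * (b * (starRingEnd ℂ) (BLe a b c d y)).re) = Gg a b c d := rfl
  rw [hGg] at h
  convert h using 1
  -- value identity
  have key : (1*B2 + (x:ℂ)*B3) * (starRingEnd ℂ) B1 + (x:ℂ)*B2 * (starRingEnd ℂ) B2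
      - 4*(b * (starRingEnd ℂ) B1)
      = ((x:ℂ))⁻¹ * (B1 * (starRingEnd ℂ) B1) + (x:ℂ) * (B2 * (starRingEnd ℂ) B2) := by
    have h4 : B2 + (x:ℂ)*B3 - 4*b = B1 * ((x:ℂ))⁻¹ := by
      simp only [B1, B2, B3, BLe1, BLe2, BLe3]
      field_simp
      ring
    calc (1*B2 + (x:ℂ)*B3) * (starRingEnd ℂ) B1 + (x:ℂ)*B2 * (starRingEnd ℂ) B2
          - 4*(b * (starRingEnd ℂ) B1)
        = (B2 + (x:ℂ)*B3 - 4*b) * (starRingEnd ℂ) B1 + (x:ℂ) * (B2 * (starRingEnd ℂ) B2) := by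
          ring
      _ = _ := by rw [h4]; ring
  have : ((1*B2 + (x:ℂ)*B3) * (starRingEnd ℂ) B1 + (x:ℂ)*B2 * (starRingEnd ℂ) B2).re
      - 4*(b * (starRingEnd ℂ) B1).re
      = (((x:ℂ))⁻¹ * (B1 * (starRingEnd ℂ) B1) + (x:ℂ) * (B2 * (starRingEnd ℂ) B2)).re := by
    rw [← key]; simp
  rw [this, Complex.mul_conj, Complex.mul_conj]
  rw [norm_sq_eq, norm_sq_eq]
  push_cast
  simp only [← Complex.ofReal_inv]
  rw [← Complex.ofReal_mul, ← Complex.ofReal_mul, ← Complex.ofReal_add, Complex.ofReal_re]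
  rw [div_eq_inv_mul]
  ring

lemma Gg_left (a c : ℂ) (x : ℝ) (hx : 0 < x) :
    Gg a 0 c 0 x = 4 * Complex.normSq a * x^2 := by
  have hx0 : (x:ℂ) ≠ 0 := by exact_mod_cast hx.ne'
  unfold Gg BLe BLe1 BLe2
  simp only [zero_mul, mul_zero, add_zero, zero_div, zero_add, sub_zero, zero_re,
    Complex.zero_re]
  have : (x:ℂ) * (2*a) * (starRingEnd ℂ) (2*a*(x:ℂ)) = ((4 * Complex.normSq a * x^2 : ℝ):ℂ) := by
    rw [map_mul, map_mul, Complex.conj_ofReal]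
    have h2 : (starRingEnd ℂ) 2 = 2 := map_ofNat _ 2
    rw [h2, show (x:ℂ) * (2*a) * (2 * (starRingEnd ℂ) a * (x:ℂ))
        = 4 * (a * (starRingEnd ℂ) a) * (x:ℂ)^2 by ring, Complex.mul_conj]
    push_cast
    ring
  rw [this, Complex.ofReal_re]

lemma Gg_right (c d : ℂ) (x : ℝ) (hx : 0 < x) :
    Gg 0 0 c d x = -(Complex.normSq d / x^2) := by
  have hx0 : (x:ℂ) ≠ 0 := by exact_mod_cast hx.ne'
  unfold Gg BLe BLe1 BLe2
  simp only [zero_mul, mul_zero, add_zero, zero_add, zero_sub, zero_re, Complex.zero_re]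
  have : (x:ℂ) * (-(d/(x:ℂ)^2)) * (starRingEnd ℂ) (d/(x:ℂ)) = ((-(Complex.normSq d / x^2) : ℝ):ℂ) := by
    rw [map_div₀, Complex.conj_ofReal]
    rw [show (x:ℂ) * (-(d/(x:ℂ)^2)) * ((starRingEnd ℂ) d / (x:ℂ))
        = -((d * (starRingEnd ℂ) d) / (x:ℂ)^2) by field_simp, Complex.mul_conj]
    push_cast
    ring
  rw [this, Complex.ofReal_re]
  simp

lemma monotoneOn_Gg (a b c d : ℂ) (p q : ℝ) (hp : 0 < p) :
    MonotoneOn (Gg a b c d) (Icc p q) := by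
  have hcont : ContinuousOn (Gg a b c d) (Icc p q) := fun x hx =>
    ((hasDerivAt_Gg a b c d x (lt_of_lt_of_le hp hx.1)).continuousAt).continuousWithinAt
  have hdiff : DifferentiableOn ℝ (Gg a b c d) (interior (Icc p q)) := by
    rw [interior_Icc]
    exact fun x hx => ((hasDerivAt_Gg a b c d x (lt_trans hp hx.1)).differentiableAt).differentiableWithinAt
  apply monotoneOn_of_deriv_nonneg (convex_Icc p q) hcont hdiff
  intro x hx
  rw [interior_Icc] at hx
  have hx0 : 0 < x := lt_trans hp hx.1
  rw [(hasDerivAt_Gg a b c d x hx0).deriv]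
  have h1 : 0 ≤ x * ‖BLe2 a b c d x‖^2 := by positivity
  have h2 : 0 ≤ ‖BLe1 a b c d x‖^2 / x := by positivity
  linarith

/-- On an interval where the derivative `BLe1` vanishes and the left endpoint value is 0,
the function `BLe` vanishes. -/
lemma BLe_zero_on_Ioo {a b c d : ℂ} {p q : ℝ} (hp : 0 < p) (hpq : p < q)
    (hzero1 : ∀ x ∈ Ioo p q, BLe1 a b c d x = 0) (hvp : BLe a b c d p = 0) :
    ∀ x ∈ Ioo p q, BLe a b c d x = 0 := by
  intro x hx
  -- constancy on (p, x]: for y ∈ Ioo p q with y ≤ x, BLe y = BLe x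
  have hconst : ∀ y ∈ Ioo p q, y ≤ x → BLe a b c d y = BLe a b c d x := by
    intro y hy hyx
    have hcont : ContinuousOn (BLe a b c d) (Icc y x) := fun z hz =>
      ((hasDerivAt_BLe a b c d z (lt_trans hp (lt_of_lt_of_le hy.1 hz.1))).continuousAt).continuousWithinAt
    have hderiv : ∀ z ∈ Ico y x, HasDerivWithinAt (BLe a b c d) 0 (Ici z) z := by
      intro z hz
      have hzmem : z ∈ Ioo p q := ⟨lt_of_lt_of_le hy.1 hz.1, lt_of_lt_of_le hz.2 (le_of_lt hx.2)⟩
      have := (hasDerivAt_BLe a b c d z (lt_trans hp hzmem.1)).hasDerivWithinAt (s := Ici z)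
      rwa [hzero1 z hzmem] at this
    exact (constant_of_has_deriv_right_zero hcont hderiv x ⟨hyx, le_refl x⟩).symm
  -- limit as y → p⁺
  have hne : 𝓝[Ioo p x] p ≠ ⊥ := by
    rw [← neBot_iff, ← mem_closure_iff_nhdsWithin_neBot, closure_Ioo (ne_of_lt hx.1)]
    exact ⟨le_refl p, le_of_lt hx.1⟩
  haveI : (𝓝[Ioo p x] p).NeBot := neBot_iff.mpr hne
  have htend1 : Tendsto (BLe a b c d) (𝓝[Ioo p x] p) (𝓝 (BLe a b c d p)) :=
    ((hasDerivAt_BLe a b c d p hp).continuousAt).continuousWithinAt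
  have htend2 : Tendsto (BLe a b c d) (𝓝[Ioo p x] p) (𝓝 (BLe a b c d x)) := by
    apply Tendsto.congr' _ tendsto_const_nhds
    filter_upwards [self_mem_nhdsWithin] with y hy
    exact (hconst y ⟨hy.1, lt_trans hy.2 hx.2⟩ (le_of_lt hy.2)).symm
  rw [← tendsto_nhds_unique htend1 htend2, hvp]

lemma coreBL (n : ℕ) (hn : 2 ≤ n) (r : ℕ → ℝ) (h1 : 0 < r 1)
    (hmono : ∀ j, 1 ≤ j → j < n → r j < r (j + 1))
    (A B C D : ℕ → ℂ)
    (hB0 : B 0 = 0) (hD0 : D 0 = 0) (hAn : A n = 0) (hBn : B n = 0)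
    (hval : ∀ j, j + 1 ≤ n → BLe (A (j+1)) (B (j+1)) (C (j+1)) (D (j+1)) (r (j+1)) = 0)
    (hval' : ∀ j, j + 1 ≤ n → BLe (A j) (B j) (C j) (D j) (r (j+1)) = 0)
    (hm1 : ∀ j, j + 1 ≤ n → BLe1 (A j) (B j) (C j) (D j) (r (j+1))
        = BLe1 (A (j+1)) (B (j+1)) (C (j+1)) (D (j+1)) (r (j+1)))
    (hm2 : ∀ j, j + 1 ≤ n → BLe2 (A j) (B j) (C j) (D j) (r (j+1))
        = BLe2 (A (j+1)) (B (j+1)) (C (j+1)) (D (j+1)) (r (j+1))) :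
    ∀ j, j ≤ n → ∀ x : ℝ, 0 < x → (1 ≤ j → r j < x) → (j < n → x < r (j+1)) →
      BLe (A j) (B j) (C j) (D j) x = 0 := by
  obtain ⟨m, hmn⟩ : ∃ m, n = m + 1 := ⟨n - 1, by omega⟩
  -- positivity of knots
  have rpos : ∀ k, 1 ≤ k → k ≤ n → 0 < r k := by
    intro k hk1 hkn
    induction k with
    | zero => omega
    | succ i ih =>
      rcases Nat.eq_or_lt_of_le hk1 with h | h
      · rwa [← h]
      · have hi1 : 1 ≤ i := by omega
        exact lt_trans (ih hi1 (by omega)) (hmono i hi1 (by omega))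
  -- abbreviation
  set Gk : ℕ → ℝ → ℝ := fun j => Gg (A j) (B j) (C j) (D j) with hGk
  have hGmatch : ∀ j, j + 1 ≤ n → Gk j (r (j+1)) = Gk (j+1) (r (j+1)) := by
    intro j hj
    show Gg _ _ _ _ _ = Gg _ _ _ _ _
    unfold Gg
    rw [hm1 j hj, hm2 j hj, hval j hj, hval' j hj]
    simp
  have hGmono : ∀ j, 1 ≤ j → j + 1 ≤ n → MonotoneOn (Gk j) (Icc (r j) (r (j+1))) :=
    fun j hj1 hjn => monotoneOn_Gg _ _ _ _ _ _ (rpos j hj1 (by omega))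
  have hmemIcc : ∀ j, 1 ≤ j → j + 1 ≤ n → r j ∈ Icc (r j) (r (j+1)) ∧ r (j+1) ∈ Icc (r j) (r (j+1)) := by
    intro j hj1 hjn
    have := hmono j hj1 (by omega)
    exact ⟨⟨le_refl _, le_of_lt this⟩, ⟨le_of_lt this, le_refl _⟩⟩
  -- chain inequality between knot values
  have chain : ∀ k j, j ≤ k → k + 1 ≤ n → Gk j (r (j+1)) ≤ Gk k (r (k+1)) := by
    intro k
    induction k with
    | zero => intro j hj _; interval_cases j; exact le_refl _
    | succ i ih =>
      intro j hj hkn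
      rcases Nat.eq_or_lt_of_le hj with h | h
      · rw [h]
      · have hji : j ≤ i := by omega
        calc Gk j (r (j+1)) ≤ Gk i (r (i+1)) := ih j hji (by omega)
          _ = Gk (i+1) (r (i+1)) := hGmatch i (by omega)
          _ ≤ Gk (i+1) (r (i+1+1)) := by
              apply hGmono (i+1) (by omega) (by omega)
                (hmemIcc (i+1) (by omega) (by omega)).1 (hmemIcc (i+1) (by omega) (by omega)).2
              exact le_of_lt (hmono (i+1) (by omega) (by omega))
  -- endpoint values
  have hL : Gk 0 (r 1) = 4 * Complex.normSq (A 0) * (r 1)^2 := by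
    show Gg _ _ _ _ _ = _
    rw [hB0, hD0]
    exact Gg_left (A 0) (C 0) (r 1) h1
  have hRn : Gk n (r n) = -(Complex.normSq (D n) / (r n)^2) := by
    show Gg _ _ _ _ _ = _
    rw [hAn, hBn]
    exact Gg_right (C n) (D n) (r n) (rpos n (by omega) (le_refl n))
  -- the chain runs from Gk 0 (r 1) to Gk m (r n) = Gk n (r n)
  have hLRle : Gk 0 (r 1) ≤ Gk n (r n) := by
    have h := chain m 0 (by omega) (by omega)
    rw [show m + 1 = n by omega] at h
    calc Gk 0 (r 1) ≤ Gk m (r n) := h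
      _ = Gk n (r n) := by have := hGmatch m (by omega); rwa [show m + 1 = n by omega] at this
  have hLnonneg : 0 ≤ Gk 0 (r 1) := by
    rw [hL]
    have h1' := Complex.normSq_nonneg (A 0)
    have h2' := sq_nonneg (r 1)
    positivity
  have hRnonpos : Gk n (r n) ≤ 0 := by
    rw [hRn]
    have : 0 ≤ Complex.normSq (D n) / (r n)^2 :=
      div_nonneg (Complex.normSq_nonneg _) (sq_nonneg _)
    linarith
  have hLzero : Gk 0 (r 1) = 0 := le_antisymm (le_trans hLRle hRnonpos) hLnonneg
  have hRzero : Gk n (r n) = 0 := le_antisymm hRnonpos (le_trans (hLzero ▸ hLRle) (le_refl _))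
  -- A 0 = 0 and D n = 0
  have hA0 : A 0 = 0 := by
    rw [hL] at hLzero
    have h2 : Complex.normSq (A 0) * (r 1)^2 = 0 := by linarith
    rcases mul_eq_zero.mp h2 with h | h
    · exact Complex.normSq_eq_zero.mp h
    · exact absurd h (by positivity)
  have hDn : D n = 0 := by
    rw [hRn] at hRzero
    have hrn : 0 < r n := rpos n (by omega) (le_refl n)
    have h2 : Complex.normSq (D n) / (r n)^2 = 0 := by linarith
    rcases div_eq_zero_iff.mp h2 with h | h
    · exact Complex.normSq_eq_zero.mp h
    · exact absurd h (by positivity)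
  -- all knot values of G vanish
  have hknot : ∀ j, j + 1 ≤ n → Gk j (r (j+1)) = 0 := by
    intro j hj
    have hlow : Gk 0 (r 1) ≤ Gk j (r (j+1)) := chain j 0 (by omega) hj
    have hhigh : Gk j (r (j+1)) ≤ Gk n (r n) := by
      have h := chain m j (by omega) (by omega)
      rw [show m + 1 = n by omega] at h
      calc Gk j (r (j+1)) ≤ Gk m (r n) := h
        _ = Gk n (r n) := by have := hGmatch m (by omega); rwa [show m + 1 = n by omega] at this
    rw [hLzero] at hlow; rw [hRzero] at hhigh
    linarith
  -- G vanishes identically on middle pieces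
  have hGzero : ∀ j, 1 ≤ j → j + 1 ≤ n → ∀ x ∈ Icc (r j) (r (j+1)), Gk j x = 0 := by
    intro j hj1 hjn x hx
    have hleft : Gk j (r j) = 0 := by
      obtain ⟨i, hi⟩ : ∃ i, j = i + 1 := ⟨j - 1, by omega⟩
      rw [hi, ← hGmatch i (by omega)]
      exact hknot i (by omega)
    have h1' := hGmono j hj1 hjn (hmemIcc j hj1 hjn).1 hx hx.1
    have h2' := hGmono j hj1 hjn hx (hmemIcc j hj1 hjn).2 hx.2
    rw [hleft] at h1'
    rw [hknot j hjn] at h2'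
    linarith
  -- derivative BLe1 vanishes on interior of middle pieces
  have hBLe1zero : ∀ j, 1 ≤ j → j + 1 ≤ n → ∀ x ∈ Ioo (r j) (r (j+1)),
      BLe1 (A j) (B j) (C j) (D j) x = 0 := by
    intro j hj1 hjn x hx
    have hx0 : 0 < x := lt_trans (rpos j hj1 (by omega)) hx.1
    have hev : Gk j =ᶠ[𝓝 x] (fun _ => (0:ℝ)) := by
      have hopen : Ioo (r j) (r (j+1)) ∈ 𝓝 x := (isOpen_Ioo).mem_nhds hx
      filter_upwards [hopen] with y hy
      exact hGzero j hj1 hjn y ⟨le_of_lt hy.1, le_of_lt hy.2⟩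
    have hd1 : deriv (Gk j) x = 0 := by rw [hev.deriv_eq]; exact deriv_const x 0
    have hd2 : deriv (Gk j) x
        = x * ‖BLe2 (A j) (B j) (C j) (D j) x‖^2 + ‖BLe1 (A j) (B j) (C j) (D j) x‖^2 / x :=
      (hasDerivAt_Gg _ _ _ _ x hx0).deriv
    have hpos1 : 0 ≤ x * ‖BLe2 (A j) (B j) (C j) (D j) x‖^2 := by positivity
    have hpos2 : 0 ≤ ‖BLe1 (A j) (B j) (C j) (D j) x‖^2 / x := by positivity
    have : ‖BLe1 (A j) (B j) (C j) (D j) x‖^2 / x = 0 := by linarith [hd1 ▸ hd2]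
    have hn2 : ‖BLe1 (A j) (B j) (C j) (D j) x‖^2 = 0 := by
      rcases div_eq_zero_iff.mp this with h | h
      · exact h
      · exact absurd h (ne_of_gt hx0)
    exact norm_eq_zero.mp (pow_eq_zero_iff (two_ne_zero) |>.mp hn2)
  -- conclusion
  intro j hjn x hx0 hlow hhigh
  rcases Nat.eq_zero_or_pos j with hj0 | hjpos
  · -- piece 0 : constant C 0, which vanishes
    subst hj0
    have hC0 : C 0 = 0 := by
      have h := hval' 0 (by omega)
      rw [hB0, hD0, hA0] at h
      unfold BLe at h
      simpa using h
    show BLe (A 0) (B 0) (C 0) (D 0) x = 0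
    rw [hA0, hB0, hC0, hD0]
    unfold BLe; simp
  rcases Nat.eq_or_lt_of_le hjn with hjn' | hjlt
  · -- piece n : constant C n, which vanishes
    have hCn : C n = 0 := by
      have h := hval m (by omega)
      rw [show m + 1 = n by omega] at h
      rw [hAn, hBn, hDn] at h
      unfold BLe at h
      simpa using h
    rw [hjn', hAn, hBn, hCn, hDn]
    unfold BLe; simp
  · -- middle pieces
    have hj1 : 1 ≤ j := hjpos
    have hjn2 : j + 1 ≤ n := hjlt
    have hrj : 0 < r j := rpos j hj1 (by omega)
    have hrlt : r j < r (j+1) := hmono j hj1 (by omega)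
    have hvpj : BLe (A j) (B j) (C j) (D j) (r j) = 0 := by
      obtain ⟨i, hi⟩ : ∃ i, j = i + 1 := ⟨j - 1, by omega⟩
      rw [hi]; exact hval i (by omega)
    exact BLe_zero_on_Ioo hrj hrlt (hBLe1zero j hj1 hjn2) hvpj x ⟨hlow hj1, hhigh hjlt⟩

lemma BLe_cast (a b c d : ℝ) (x : ℝ) :
    BLe (a:ℂ) (b:ℂ) (c:ℂ) (d:ℂ) x = ((RLe a b c d x : ℝ) : ℂ) := by
  unfold BLe RLe; push_cast; ring
lemma BLe1_cast (a b c d : ℝ) (x : ℝ) :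
    BLe1 (a:ℂ) (b:ℂ) (c:ℂ) (d:ℂ) x = ((RLe1 a b c d x : ℝ) : ℂ) := by
  unfold BLe1 RLe1; push_cast; ring
lemma BLe2_cast (a b c d : ℝ) (x : ℝ) :
    BLe2 (a:ℂ) (b:ℂ) (c:ℂ) (d:ℂ) x = ((RLe2 a b c d x : ℝ) : ℂ) := by
  unfold BLe2 RLe2; push_cast; ring

lemma BLe_sub (a b c d a' b' c' d' : ℂ) (x : ℝ) :
    BLe (a - a') (b - b') (c - c') (d - d') x = BLe a b c d x - BLe a' b' c' d' x := by
  unfold BLe; ring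
lemma BLe1_sub (a b c d a' b' c' d' : ℂ) (x : ℝ) :
    BLe1 (a - a') (b - b') (c - c') (d - d') x = BLe1 a b c d x - BLe1 a' b' c' d' x := by
  unfold BLe1; ring
lemma BLe2_sub (a b c d a' b' c' d' : ℂ) (x : ℝ) :
    BLe2 (a - a') (b - b') (c - c') (d - d') x = BLe2 a b c d x - BLe2 a' b' c' d' x := by
  unfold BLe2; ring

lemma Kfun_zero {x t : ℝ} (hx : x ≤ t) : Kfun x t = 0 := if_pos hx

lemma Kfun_eq {t x : ℝ} (ht : 0 < t) (hx : t ≤ x) :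
    Kfun x t = RLe (fa t) (fb t) (fc t) (fd t) x := by
  rcases eq_or_lt_of_le hx with h | h
  · rw [← h, Kfun_zero (le_refl t)]
    unfold RLe fa fb fc fd
    ring
  · have hx0 : 0 < x := lt_trans ht h
    unfold Kfun
    rw [if_neg (not_le.mpr h)]
    rw [Real.log_div (ne_of_gt hx0) (ne_of_gt ht)]
    unfold RLe fa fb fc fd
    ring

lemma RLe_f_self {t : ℝ} (ht : 0 < t) : RLe (fa t) (fb t) (fc t) (fd t) t = 0 := by
  unfold RLe fa fb fc fd; ring
lemma RLe1_f_self {t : ℝ} (ht : 0 < t) : RLe1 (fa t) (fb t) (fc t) (fd t) t = 0 := by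
  unfold RLe1 fa fb fd; field_simp; ring
lemma RLe2_f_self {t : ℝ} (ht : 0 < t) : RLe2 (fa t) (fb t) (fc t) (fd t) t = 0 := by
  unfold RLe2 fa fb fd; field_simp; ring

lemma RLe_sum (F : Finset ℕ) (lam : ℕ → ℝ) (A B C D : ℕ → ℝ) (x : ℝ) :
    ∑ j ∈ F, lam j * RLe (A j) (B j) (C j) (D j) x
      = RLe (∑ j ∈ F, lam j * A j) (∑ j ∈ F, lam j * B j)
          (∑ j ∈ F, lam j * C j) (∑ j ∈ F, lam j * D j) x := by
  unfold RLe
  rw [Finset.sum_mul, Finset.sum_mul, Finset.sum_mul, Finset.sum_mul,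
    ← Finset.sum_add_distrib, ← Finset.sum_add_distrib, ← Finset.sum_add_distrib]
  exact Finset.sum_congr rfl (fun j _ => by ring)



-- helper: equality at a boundary point via limits
lemma eq_at_edge {f g : ℝ → ℂ} {s : Set ℝ} {q : ℝ} (hq : (𝓝[s] q).NeBot)
    (hf : ContinuousAt f q) (hg : ContinuousAt g q) (h : ∀ x ∈ s, f x = g x) :
    f q = g q := by
  have t1 : Tendsto f (𝓝[s] q) (𝓝 (f q)) := hf.continuousWithinAt
  have t2 : Tendsto f (𝓝[s] q) (𝓝 (g q)) := by
    apply Tendsto.congr' _ hg.continuousWithinAt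
    filter_upwards [self_mem_nhdsWithin] with y hy
    exact (h y hy).symm
  exact tendsto_nhds_unique t1 t2

lemma nhdsWithin_Ioo_left_neBot' {p q : ℝ} (h : p < q) : (𝓝[Ioo p q] q).NeBot := by
  rw [← mem_closure_iff_nhdsWithin_neBot, closure_Ioo (ne_of_lt h)]
  exact ⟨le_of_lt h, le_refl q⟩

lemma nhdsWithin_Ioo_right_neBot' {p q : ℝ} (h : p < q) : (𝓝[Ioo p q] p).NeBot := by
  rw [← mem_closure_iff_nhdsWithin_neBot, closure_Ioo (ne_of_lt h)]
  exact ⟨le_refl p, le_of_lt h⟩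

lemma nhdsWithin_Ioi_neBot'' {p : ℝ} : (𝓝[Ioi p] p).NeBot := by
  rw [← mem_closure_iff_nhdsWithin_neBot, closure_Ioi]
  exact le_refl p

-- deriv transfer on an open set
lemma deriv_eqOn' {f g : ℝ → ℂ} {s : Set ℝ} (hs : IsOpen s) (hfg : ∀ y ∈ s, f y = g y)
    {x : ℝ} (hx : x ∈ s) : deriv f x = deriv g x := by
  apply Filter.EventuallyEq.deriv_eq
  filter_upwards [hs.mem_nhds hx] with y hy
  exact hfg y hy



lemma RLe_add_smul (a b c d t p q rr s x : ℝ) :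
    RLe (a + t*p) (b + t*q) (c + t*rr) (d + t*s) x
      = RLe a b c d x + t * RLe p q rr s x := by unfold RLe; ring
lemma RLe1_add_smul (a b c d t p q rr s x : ℝ) :
    RLe1 (a + t*p) (b + t*q) (c + t*rr) (d + t*s) x
      = RLe1 a b c d x + t * RLe1 p q rr s x := by unfold RLe1; ring
lemma RLe2_add_smul (a b c d t p q rr s x : ℝ) :
    RLe2 (a + t*p) (b + t*q) (c + t*rr) (d + t*s) x
      = RLe2 a b c d x + t * RLe2 p q rr s x := by unfold RLe2; ring


/-- if `λ̂₂, …, λ̂_n` solve the system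
`Σ_{j=2}^n λ_j·H_{0,∞}(r_k, r_j) = ν_k − ν₁`, then
`s_{0,∞}(r) = ν₁ + Σ_{j=2}^n λ̂_j·H_{0,∞}(r, r_j)` coincides on `(0,∞)` with the
non-singular Beppo Levi `L₀`-spline `σ^B` interpolating `ν j` at the knots. -/
theorem stmt9 (n : ℕ) (hn : 2 ≤ n) (r : ℕ → ℝ) (hpos : 0 < r 1)
    (hmono : ∀ j, 1 ≤ j → j < n → r j < r (j + 1))
    (ν lam : ℕ → ℝ)
    (hlam : ∀ k, 2 ≤ k → k ≤ n →
      ∑ j ∈ Finset.Icc 2 n, lam j * Hfun (r 1) (r k) (r j) = ν k - ν 1)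
    (σ : ℝ → ℂ) (hσ : IsBLSpline n r σ) (hns : NonSingularBLS (r 1) σ)
    (hint : ∀ j, 1 ≤ j → j ≤ n → σ (r j) = (ν j : ℂ)) :
    ∀ x ∈ Set.Ioi (0:ℝ),
      σ x = ((ν 1 + ∑ j ∈ Finset.Icc 2 n, lam j * Hfun (r 1) x (r j) : ℝ) : ℂ) := by
  classical
  set sR : ℝ → ℝ := fun y => ν 1 + ∑ j ∈ Finset.Icc 2 n, lam j * Hfun (r 1) y (r j) with hsRdef
  -- knot positivity and monotonicity
  have rpos : ∀ k, 1 ≤ k → k ≤ n → 0 < r k := by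
    intro k hk1 hkn
    induction k with
    | zero => omega
    | succ i ih =>
      rcases Nat.eq_or_lt_of_le hk1 with h | h
      · rwa [← h]
      · have hi1 : 1 ≤ i := by omega
        exact lt_trans (ih hi1 (by omega)) (hmono i hi1 (by omega))
  have rmono : ∀ j k, 1 ≤ j → j ≤ k → k ≤ n → r j ≤ r k := by
    intro j k hj1 hjk hkn
    induction k with
    | zero => omega
    | succ i ih =>
      rcases Nat.eq_or_lt_of_le hjk with h | h
      · rw [h]
      · have hji : j ≤ i := by omega
        have h1 : 1 ≤ i := by omega
        exact le_trans (ih hji (by omega)) (le_of_lt (hmono i h1 (by omega)))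
  -- σ piece coefficients
  obtain ⟨a0, c0, hσ0⟩ := hns
  obtain ⟨cn, dn, hσn⟩ := hσ.right
  have Hmid : ∀ k : ℕ, ∃ a b c d : ℂ,
      (1 ≤ k → k + 1 ≤ n → ∀ x ∈ Set.Ioo (r k) (r (k+1)), σ x = BLe a b c d x) := by
    intro k
    by_cases h : 1 ≤ k ∧ k + 1 ≤ n
    · obtain ⟨a, b, c, d, hp⟩ := hσ.pieces k h.1 h.2
      exact ⟨a, b, c, d, fun _ _ x hx => hp x hx⟩
    · exact ⟨0, 0, 0, 0, fun h1 h2 => absurd ⟨h1, h2⟩ h⟩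
  choose Am Bm Cm Dm hm using Hmid
  set Aσ : ℕ → ℂ := fun k => if k = 0 then a0 else if k = n then 0 else Am k with hAσ
  set Bσ : ℕ → ℂ := fun k => if k = 0 then 0 else if k = n then 0 else Bm k with hBσ
  set Cσ : ℕ → ℂ := fun k => if k = 0 then c0 else if k = n then cn else Cm k with hCσ
  set Dσ : ℕ → ℂ := fun k => if k = 0 then 0 else if k = n then dn else Dm k with hDσ
  set I : ℕ → Set ℝ := fun k =>
    if k = 0 then Set.Ioo 0 (r 1) else if k = n then Set.Ioi (r n)
      else Set.Ioo (r k) (r (k+1)) with hIdef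
  have hn0 : n ≠ 0 := by omega
  have hIopen : ∀ k, IsOpen (I k) := by
    intro k
    simp only [hIdef]
    split
    · exact isOpen_Ioo
    · split
      · exact isOpen_Ioi
      · exact isOpen_Ioo
  have hIsub : ∀ k, k ≤ n → ∀ y ∈ I k, 0 < y := by
    intro k hk y hy
    simp only [hIdef] at hy
    split at hy
    · exact hy.1
    · split at hy
      · exact lt_trans (rpos n (by omega) le_rfl) hy
      · rename_i h0 hn'
        exact lt_of_lt_of_le (rpos k (by omega) hk) (le_of_lt hy.1)
  have hσI : ∀ k, k ≤ n → ∀ y ∈ I k, σ y = BLe (Aσ k) (Bσ k) (Cσ k) (Dσ k) y := by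
    intro k hk y hy
    by_cases h0 : k = 0
    · subst h0
      simp only [hIdef, if_pos rfl] at hy
      simp only [hAσ, hBσ, hCσ, hDσ, if_pos rfl]
      rw [hσ0 y hy]
      unfold BLe; push_cast; ring
    · by_cases hn' : k = n
      · subst hn'
        simp only [hIdef, if_neg h0, if_pos rfl] at hy
        simp only [hAσ, hBσ, hCσ, hDσ, if_neg h0, if_pos rfl]
        rw [hσn y hy]
        unfold BLe; push_cast; ring
      · simp only [hIdef, if_neg h0, if_neg hn'] at hy
        simp only [hAσ, hBσ, hCσ, hDσ, if_neg h0, if_neg hn']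
        exact hm k (by omega) (by omega) y hy
  -- smoothness extraction
  have h2' : ContDiffOn ℝ (1+1) σ (Set.Ioi 0) := by norm_num; exact hσ.smooth
  have h3 := (contDiffOn_succ_iff_deriv_of_isOpen isOpen_Ioi).mp h2'
  have h4 := (contDiffOn_succ_iff_deriv_of_isOpen (n := 0) isOpen_Ioi).mp (by
    have := h3.2.2
    norm_num at this ⊢
    exact this)
  have hσct : ∀ y : ℝ, 0 < y → ContinuousAt σ y := fun y hy =>
    (h3.1.differentiableAt (isOpen_Ioi.mem_nhds hy)).continuousAt
  have hσ1ct : ∀ y : ℝ, 0 < y → ContinuousAt (deriv σ) y := fun y hy =>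
    (h4.1.differentiableAt (isOpen_Ioi.mem_nhds hy)).continuousAt
  have hσ2ct : ∀ y : ℝ, 0 < y → ContinuousAt (deriv (deriv σ)) y := fun y hy =>
    (h4.2.2.continuousOn).continuousAt (isOpen_Ioi.mem_nhds hy)
  have hσ1I : ∀ k, k ≤ n → ∀ y ∈ I k, deriv σ y = BLe1 (Aσ k) (Bσ k) (Cσ k) (Dσ k) y := by
    intro k hk y hy
    rw [deriv_eqOn' (hIopen k) (hσI k hk) hy,
      (hasDerivAt_BLe _ _ _ _ y (hIsub k hk y hy)).deriv]
  have hσ2I : ∀ k, k ≤ n → ∀ y ∈ I k,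
      deriv (deriv σ) y = BLe2 (Aσ k) (Bσ k) (Cσ k) (Dσ k) y := by
    intro k hk y hy
    rw [deriv_eqOn' (hIopen k) (hσ1I k hk) hy,
      (hasDerivAt_BLe1 _ _ _ _ y (hIsub k hk y hy)).deriv]
  -- edge values from the left / right
  have hedgeL : ∀ j, j + 1 ≤ n →
      BLe (Aσ j) (Bσ j) (Cσ j) (Dσ j) (r (j+1)) = σ (r (j+1)) ∧
      BLe1 (Aσ j) (Bσ j) (Cσ j) (Dσ j) (r (j+1)) = deriv σ (r (j+1)) ∧
      BLe2 (Aσ j) (Bσ j) (Cσ j) (Dσ j) (r (j+1)) = deriv (deriv σ) (r (j+1)) := by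
    intro j hj
    have hrj1 : 0 < r (j+1) := rpos (j+1) (by omega) hj
    obtain ⟨p, hpI, hplt⟩ : ∃ p, I j = Set.Ioo p (r (j+1)) ∧ p < r (j+1) := by
      by_cases h0 : j = 0
      · subst h0; exact ⟨0, by simp only [hIdef, if_pos rfl], hrj1⟩
      · refine ⟨r j, by simp only [hIdef, if_neg h0, if_neg (show j ≠ n by omega)], ?_⟩
        exact hmono j (by omega) (by omega)
    have hne : (𝓝[I j] (r (j+1))).NeBot := by
      rw [hpI]; exact nhdsWithin_Ioo_left_neBot' hplt
    refine ⟨?_, ?_, ?_⟩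
    · exact eq_at_edge hne ((hasDerivAt_BLe _ _ _ _ _ hrj1).continuousAt)
        (hσct _ hrj1) (fun y hy => (hσI j (by omega) y hy).symm)
    · exact eq_at_edge hne ((hasDerivAt_BLe1 _ _ _ _ _ hrj1).continuousAt)
        (hσ1ct _ hrj1) (fun y hy => (hσ1I j (by omega) y hy).symm)
    · exact eq_at_edge hne (continuousAt_BLe2 _ _ _ _ _ hrj1)
        (hσ2ct _ hrj1) (fun y hy => (hσ2I j (by omega) y hy).symm)
  have hedgeR : ∀ j, j + 1 ≤ n →
      BLe (Aσ (j+1)) (Bσ (j+1)) (Cσ (j+1)) (Dσ (j+1)) (r (j+1)) = σ (r (j+1)) ∧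
      BLe1 (Aσ (j+1)) (Bσ (j+1)) (Cσ (j+1)) (Dσ (j+1)) (r (j+1)) = deriv σ (r (j+1)) ∧
      BLe2 (Aσ (j+1)) (Bσ (j+1)) (Cσ (j+1)) (Dσ (j+1)) (r (j+1)) = deriv (deriv σ) (r (j+1)) := by
    intro j hj
    have hrj1 : 0 < r (j+1) := rpos (j+1) (by omega) hj
    have hne : (𝓝[I (j+1)] (r (j+1))).NeBot := by
      by_cases hn' : j + 1 = n
      · rw [show I (j+1) = Set.Ioi (r (j+1)) by
          simp [hIdef, hn', hn0]]
        exact nhdsWithin_Ioi_neBot''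
      · rw [show I (j+1) = Set.Ioo (r (j+1)) (r (j+2)) by
          simp only [hIdef, if_neg (Nat.succ_ne_zero j), if_neg hn']]
        exact nhdsWithin_Ioo_right_neBot' (hmono (j+1) (by omega) (by omega))
    refine ⟨?_, ?_, ?_⟩
    · exact eq_at_edge hne ((hasDerivAt_BLe _ _ _ _ _ hrj1).continuousAt)
        (hσct _ hrj1) (fun y hy => (hσI (j+1) (by omega) y hy).symm)
    · exact eq_at_edge hne ((hasDerivAt_BLe1 _ _ _ _ _ hrj1).continuousAt)
        (hσ1ct _ hrj1) (fun y hy => (hσ1I (j+1) (by omega) y hy).symm)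
    · exact eq_at_edge hne (continuousAt_BLe2 _ _ _ _ _ hrj1)
        (hσ2ct _ hrj1) (fun y hy => (hσ2I (j+1) (by omega) y hy).symm)
  -- s-side coefficients
  set S2 : ℝ := ∑ j ∈ Finset.Icc 2 n, lam j with hS2
  set SA : ℕ → ℝ := fun k => (∑ j ∈ Finset.Icc 2 n, lam j * Real.log (r j / r 1) / 4)
      + (if k = 0 then 0 else -S2 * fa (r 1) + ∑ j ∈ Finset.Icc 2 k, lam j * fa (r j)) with hSA
  set SB : ℕ → ℝ := fun k =>
      (if k = 0 then 0 else -S2 * fb (r 1) + ∑ j ∈ Finset.Icc 2 k, lam j * fb (r j)) with hSB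
  set SC : ℕ → ℝ := fun k =>
      (ν 1 + ∑ j ∈ Finset.Icc 2 n, lam j * (-(r 1)^2 * Real.log (r j / r 1) / 4))
      + (if k = 0 then 0 else -S2 * fc (r 1) + ∑ j ∈ Finset.Icc 2 k, lam j * fc (r j)) with hSC
  set SD : ℕ → ℝ := fun k =>
      (if k = 0 then 0 else -S2 * fd (r 1) + ∑ j ∈ Finset.Icc 2 k, lam j * fd (r j)) with hSD
  -- s piece representation for k ≥ 1
  have hsk : ∀ k, 1 ≤ k → k ≤ n → ∀ y : ℝ, r k ≤ y → (k < n → y < r (k+1)) →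
      sR y = RLe (SA k) (SB k) (SC k) (SD k) y := by
    intro k hk1 hkn y hy1 hy2
    have hterm : ∀ j ∈ Finset.Icc 2 n, lam j * Hfun (r 1) y (r j)
        = (if j ≤ k then lam j * RLe (fa (r j)) (fb (r j)) (fc (r j)) (fd (r j)) y else 0)
          - lam j * RLe (fa (r 1)) (fb (r 1)) (fc (r 1)) (fd (r 1)) y
          + (lam j * Real.log (r j / r 1) / 4 * y^2
             + lam j * (-(r 1)^2 * Real.log (r j / r 1) / 4)) := by
      intro j hj
      rw [Finset.mem_Icc] at hj
      unfold Hfun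
      rw [Kfun_zero (rmono 1 j (by omega) (by omega) hj.2)]
      rw [Kfun_eq hpos (le_trans (rmono 1 k (by omega) hk1 hkn) hy1)]
      by_cases hjk : j ≤ k
      · rw [if_pos hjk, Kfun_eq (rpos j (by omega) hj.2) (le_trans (rmono j k (by omega) hjk hkn) hy1)]
        ring
      · rw [if_neg hjk, Kfun_zero (le_of_lt (lt_of_lt_of_le (hy2 (by omega))
          (rmono (k+1) j (by omega) (by omega) hj.2)))]
        ring
    have hsum : ∑ j ∈ Finset.Icc 2 n, lam j * Hfun (r 1) y (r j)
        = (∑ j ∈ Finset.Icc 2 k, lam j * RLe (fa (r j)) (fb (r j)) (fc (r j)) (fd (r j)) y)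
          - S2 * RLe (fa (r 1)) (fb (r 1)) (fc (r 1)) (fd (r 1)) y
          + ((∑ j ∈ Finset.Icc 2 n, lam j * Real.log (r j / r 1) / 4) * y^2
             + ∑ j ∈ Finset.Icc 2 n, lam j * (-(r 1)^2 * Real.log (r j / r 1) / 4)) := by
      rw [Finset.sum_congr rfl hterm]
      rw [Finset.sum_add_distrib, Finset.sum_sub_distrib, Finset.sum_add_distrib]
      congr 1
      · congr 1
        · rw [← Finset.sum_filter]
          congr 1
          ext a
          simp only [Finset.mem_filter, Finset.mem_Icc]
          omega
        · rw [hS2, Finset.sum_mul]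
      · congr 1
        rw [Finset.sum_mul]
    rw [show sR y = ν 1 + ∑ j ∈ Finset.Icc 2 n, lam j * Hfun (r 1) y (r j) from rfl, hsum,
      RLe_sum]
    simp only [hSA, hSB, hSC, hSD, if_neg (show k ≠ 0 by omega)]
    unfold RLe
    ring
  -- s piece representation for k = 0
  have hs0 : ∀ y ∈ Set.Ioo (0:ℝ) (r 1), sR y = RLe (SA 0) (SB 0) (SC 0) (SD 0) y := by
    intro y hy
    have hterm : ∀ j ∈ Finset.Icc 2 n, lam j * Hfun (r 1) y (r j)
        = lam j * Real.log (r j / r 1) / 4 * y^2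
          + lam j * (-(r 1)^2 * Real.log (r j / r 1) / 4) := by
      intro j hj
      rw [Finset.mem_Icc] at hj
      unfold Hfun
      rw [Kfun_zero (rmono 1 j (by omega) (by omega) hj.2)]
      rw [Kfun_zero (le_of_lt hy.2)]
      rw [Kfun_zero (le_trans (le_of_lt hy.2) (rmono 1 j (by omega) (by omega) hj.2))]
      ring
    have e1 : ∑ j ∈ Finset.Icc 2 n, lam j * Real.log (r j / r 1) / 4 * y^2
        = (∑ j ∈ Finset.Icc 2 n, lam j * Real.log (r j / r 1) / 4) * y^2 :=
      (Finset.sum_mul (Finset.Icc 2 n) (fun j => lam j * Real.log (r j / r 1) / 4) (y^2)).symm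
    rw [show sR y = ν 1 + ∑ j ∈ Finset.Icc 2 n, lam j * Hfun (r 1) y (r j) from rfl,
      Finset.sum_congr rfl hterm, Finset.sum_add_distrib, e1]
    simp only [hSA, hSB, hSC, hSD, reduceIte]
    unfold RLe
    ring
  -- knot values of s
  have hsval : ∀ k, 1 ≤ k → k ≤ n → sR (r k) = ν k := by
    intro k hk1 hkn
    rcases Nat.eq_or_lt_of_le hk1 with h1 | h2
    · rw [← h1]
      have hterm : ∀ j ∈ Finset.Icc 2 n, lam j * Hfun (r 1) (r 1) (r j) = 0 := by
        intro j hj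
        rw [Finset.mem_Icc] at hj
        unfold Hfun
        rw [Kfun_zero (rmono 1 j (by omega) (by omega) hj.2), Kfun_zero le_rfl]
        ring
      rw [show sR (r 1) = ν 1 + ∑ j ∈ Finset.Icc 2 n, lam j * Hfun (r 1) (r 1) (r j) from rfl,
        Finset.sum_congr rfl hterm]
      simp
    · rw [show sR (r k) = ν 1 + ∑ j ∈ Finset.Icc 2 n, lam j * Hfun (r 1) (r k) (r j) from rfl,
        hlam k (by omega) hkn]
      ring
  -- s-side matching at knots
  have hstep : ∀ (J : ℕ) (t : ℝ),
      SA (J+1) = SA J + t * fa (r (J+1)) → SB (J+1) = SB J + t * fb (r (J+1)) →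
      SC (J+1) = SC J + t * fc (r (J+1)) → SD (J+1) = SD J + t * fd (r (J+1)) →
      0 < r (J+1) →
      RLe (SA J) (SB J) (SC J) (SD J) (r (J+1)) = RLe (SA (J+1)) (SB (J+1)) (SC (J+1)) (SD (J+1)) (r (J+1)) ∧
      RLe1 (SA J) (SB J) (SC J) (SD J) (r (J+1)) = RLe1 (SA (J+1)) (SB (J+1)) (SC (J+1)) (SD (J+1)) (r (J+1)) ∧
      RLe2 (SA J) (SB J) (SC J) (SD J) (r (J+1)) = RLe2 (SA (J+1)) (SB (J+1)) (SC (J+1)) (SD (J+1)) (r (J+1)) := by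
    intro J t e1 e2 e3 e4 hu
    rw [e1, e2, e3, e4, RLe_add_smul, RLe1_add_smul, RLe2_add_smul,
      RLe_f_self hu, RLe1_f_self hu, RLe2_f_self hu]
    refine ⟨by ring, by ring, by ring⟩
  have hsmatch : ∀ j, j + 1 ≤ n →
      RLe (SA j) (SB j) (SC j) (SD j) (r (j+1)) = RLe (SA (j+1)) (SB (j+1)) (SC (j+1)) (SD (j+1)) (r (j+1)) ∧
      RLe1 (SA j) (SB j) (SC j) (SD j) (r (j+1)) = RLe1 (SA (j+1)) (SB (j+1)) (SC (j+1)) (SD (j+1)) (r (j+1)) ∧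
      RLe2 (SA j) (SB j) (SC j) (SD j) (r (j+1)) = RLe2 (SA (j+1)) (SB (j+1)) (SC (j+1)) (SD (j+1)) (r (j+1)) := by
    intro j hj
    have hrj1 : 0 < r (j+1) := rpos (j+1) (by omega) hj
    rcases Nat.eq_zero_or_pos j with h0 | hjpos
    · subst h0
      have hempty : Finset.Icc 2 1 = (∅ : Finset ℕ) := by decide
      apply hstep 0 (-S2)
      · simp only [hSA, reduceIte, if_neg (show (1:ℕ) ≠ 0 by omega), hempty,
          Finset.sum_empty, add_zero]; try ring
      · simp only [hSB, reduceIte, if_neg (show (1:ℕ) ≠ 0 by omega), hempty,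
          Finset.sum_empty, add_zero]; try ring
      · simp only [hSC, reduceIte, if_neg (show (1:ℕ) ≠ 0 by omega), hempty,
          Finset.sum_empty, add_zero]; try ring
      · simp only [hSD, reduceIte, if_neg (show (1:ℕ) ≠ 0 by omega), hempty,
          Finset.sum_empty, add_zero]; try ring
      · exact hrj1
    · apply hstep j (lam (j+1))
      · simp only [hSA, if_neg (show j ≠ 0 by omega), if_neg (Nat.succ_ne_zero j)]
        rw [Finset.sum_Icc_succ_top (by omega : 2 ≤ j + 1)]
        ring
      · simp only [hSB, if_neg (show j ≠ 0 by omega), if_neg (Nat.succ_ne_zero j)]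
        rw [Finset.sum_Icc_succ_top (by omega : 2 ≤ j + 1)]
        ring
      · simp only [hSC, if_neg (show j ≠ 0 by omega), if_neg (Nat.succ_ne_zero j)]
        rw [Finset.sum_Icc_succ_top (by omega : 2 ≤ j + 1)]
        ring
      · simp only [hSD, if_neg (show j ≠ 0 by omega), if_neg (Nat.succ_ne_zero j)]
        rw [Finset.sum_Icc_succ_top (by omega : 2 ≤ j + 1)]
        ring
      · exact hrj1
  -- vanishing of leading s coefficients on the last piece
  have hSAn : SA n = 0 := by
    have he : SA n = ∑ j ∈ Finset.Icc 2 n,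
        (lam j * Real.log (r j / r 1) / 4 + lam j * fa (r j) - lam j * fa (r 1)) := by
      simp only [hSA, if_neg hn0]
      rw [Finset.sum_sub_distrib, Finset.sum_add_distrib, ← Finset.sum_mul, ← hS2]
      ring
    rw [he]
    apply Finset.sum_eq_zero
    intro j hj
    rw [Finset.mem_Icc] at hj
    rw [Real.log_div (ne_of_gt (rpos j (by omega) hj.2)) (ne_of_gt hpos)]
    unfold fa
    ring
  have hSBn : SB n = 0 := by
    simp only [hSB, if_neg hn0]
    rw [show (∑ j ∈ Finset.Icc 2 n, lam j * fb (r j)) = ∑ j ∈ Finset.Icc 2 n, lam j * (1/4)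
      from Finset.sum_congr rfl (fun j _ => rfl), ← Finset.sum_mul, ← hS2]
    unfold fb
    ring
  -- difference coefficients and the core lemma
  set Aq : ℕ → ℂ := fun k => Aσ k - ((SA k : ℝ) : ℂ) with hAq
  set Bq : ℕ → ℂ := fun k => Bσ k - ((SB k : ℝ) : ℂ) with hBq
  set Cq : ℕ → ℂ := fun k => Cσ k - ((SC k : ℝ) : ℂ) with hCq
  set Dq : ℕ → ℂ := fun k => Dσ k - ((SD k : ℝ) : ℂ) with hDq
  have hValR : ∀ j, j + 1 ≤ n →
      RLe (SA (j+1)) (SB (j+1)) (SC (j+1)) (SD (j+1)) (r (j+1)) = ν (j+1) := by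
    intro j hj
    rw [← hsk (j+1) (by omega) hj (r (j+1)) le_rfl
      (fun h => hmono (j+1) (by omega) h), hsval (j+1) (by omega) hj]
  have hcore := coreBL n hn r hpos hmono Aq Bq Cq Dq
    (by simp only [hBq, hBσ, hSB, if_pos rfl]; simp)
    (by simp only [hDq, hDσ, hSD, if_pos rfl]; simp)
    (by simp only [hAq, hAσ, if_neg hn0, if_pos rfl]; rw [hSAn]; simp)
    (by simp only [hBq, hBσ, if_neg hn0, if_pos rfl]; rw [hSBn]; simp)
    (by -- hval : right piece value at its left knot
      intro j hj
      rw [show Aq (j+1) = Aσ (j+1) - ((SA (j+1) : ℝ):ℂ) from rfl,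
        show Bq (j+1) = Bσ (j+1) - ((SB (j+1) : ℝ):ℂ) from rfl,
        show Cq (j+1) = Cσ (j+1) - ((SC (j+1) : ℝ):ℂ) from rfl,
        show Dq (j+1) = Dσ (j+1) - ((SD (j+1) : ℝ):ℂ) from rfl, BLe_sub,
        (hedgeR j hj).1, hint (j+1) (by omega) hj, BLe_cast, hValR j hj]
      simp)
    (by -- hval' : left piece value at its right knot
      intro j hj
      rw [show Aq j = Aσ j - ((SA j : ℝ):ℂ) from rfl,
        show Bq j = Bσ j - ((SB j : ℝ):ℂ) from rfl,
        show Cq j = Cσ j - ((SC j : ℝ):ℂ) from rfl,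
        show Dq j = Dσ j - ((SD j : ℝ):ℂ) from rfl, BLe_sub,
        (hedgeL j hj).1, hint (j+1) (by omega) hj, BLe_cast, (hsmatch j hj).1, hValR j hj]
      simp)
    (by -- hm1
      intro j hj
      rw [show Aq j = Aσ j - ((SA j : ℝ):ℂ) from rfl,
        show Bq j = Bσ j - ((SB j : ℝ):ℂ) from rfl,
        show Cq j = Cσ j - ((SC j : ℝ):ℂ) from rfl,
        show Dq j = Dσ j - ((SD j : ℝ):ℂ) from rfl,
        show Aq (j+1) = Aσ (j+1) - ((SA (j+1) : ℝ):ℂ) from rfl,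
        show Bq (j+1) = Bσ (j+1) - ((SB (j+1) : ℝ):ℂ) from rfl,
        show Cq (j+1) = Cσ (j+1) - ((SC (j+1) : ℝ):ℂ) from rfl,
        show Dq (j+1) = Dσ (j+1) - ((SD (j+1) : ℝ):ℂ) from rfl,
        BLe1_sub, BLe1_sub, (hedgeL j hj).2.1, (hedgeR j hj).2.1,
        BLe1_cast, BLe1_cast, (hsmatch j hj).2.1])
    (by -- hm2
      intro j hj
      rw [show Aq j = Aσ j - ((SA j : ℝ):ℂ) from rfl,
        show Bq j = Bσ j - ((SB j : ℝ):ℂ) from rfl,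
        show Cq j = Cσ j - ((SC j : ℝ):ℂ) from rfl,
        show Dq j = Dσ j - ((SD j : ℝ):ℂ) from rfl,
        show Aq (j+1) = Aσ (j+1) - ((SA (j+1) : ℝ):ℂ) from rfl,
        show Bq (j+1) = Bσ (j+1) - ((SB (j+1) : ℝ):ℂ) from rfl,
        show Cq (j+1) = Cσ (j+1) - ((SC (j+1) : ℝ):ℂ) from rfl,
        show Dq (j+1) = Dσ (j+1) - ((SD (j+1) : ℝ):ℂ) from rfl,
        BLe2_sub, BLe2_sub, (hedgeL j hj).2.2, (hedgeR j hj).2.2,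
        BLe2_cast, BLe2_cast, (hsmatch j hj).2.2])
  -- combining
  have hcomb : ∀ (k : ℕ) (y : ℝ),
      BLe (Aq k) (Bq k) (Cq k) (Dq k) y = 0 →
      σ y = BLe (Aσ k) (Bσ k) (Cσ k) (Dσ k) y →
      sR y = RLe (SA k) (SB k) (SC k) (SD k) y →
      σ y = ((sR y : ℝ) : ℂ) := by
    intro k y h0 h1 h2
    rw [show Aq k = Aσ k - ((SA k : ℝ):ℂ) from rfl,
      show Bq k = Bσ k - ((SB k : ℝ):ℂ) from rfl,
      show Cq k = Cσ k - ((SC k : ℝ):ℂ) from rfl,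
      show Dq k = Dσ k - ((SD k : ℝ):ℂ) from rfl, BLe_sub] at h0
    rw [h1, sub_eq_zero.mp h0, BLe_cast, h2]
  -- conclusion
  intro x hx
  rw [Set.mem_Ioi] at hx
  show σ x = ((sR x : ℝ) : ℂ)
  rcases lt_trichotomy x (r 1) with hlt | heq | hgt
  · exact hcomb 0 x
      (hcore 0 (by omega) x hx (fun h => absurd h (by omega)) (fun _ => hlt))
      (hσI 0 (by omega) x (by simp only [hIdef, if_pos rfl]; exact ⟨hx, hlt⟩))
      (hs0 x ⟨hx, hlt⟩)
  · rw [heq, hint 1 (by omega) (by omega)]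
    exact_mod_cast congrArg (fun t : ℝ => ((t:ℝ):ℂ)) (hsval 1 (by omega) (by omega)).symm
  · set T := (Finset.Icc 1 n).filter (fun j => r j ≤ x) with hT
    have hT1 : 1 ∈ T := by
      simp only [hT, Finset.mem_filter, Finset.mem_Icc]
      exact ⟨⟨le_refl 1, by omega⟩, le_of_lt hgt⟩
    have hTne : T.Nonempty := ⟨1, hT1⟩
    set k := T.max' hTne with hk
    have hkmem := T.max'_mem hTne
    simp only [hT, Finset.mem_filter, Finset.mem_Icc] at hkmem
    have hk1 : 1 ≤ k := hkmem.1.1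
    have hkn : k ≤ n := hkmem.1.2
    have hrkx : r k ≤ x := hkmem.2
    rcases eq_or_lt_of_le hrkx with heq2 | hlt2
    · rw [← heq2, hint k hk1 hkn]
      exact_mod_cast congrArg (fun t : ℝ => ((t:ℝ):ℂ)) (hsval k hk1 hkn).symm
    · rcases Nat.eq_or_lt_of_le hkn with hkeq | hklt
      · have hrnx : r n < x := by rw [← hkeq]; exact hlt2
        exact hcomb n x
          (hcore n le_rfl x hx (fun _ => hrnx) (fun h => absurd h (lt_irrefl n)))
          (hσI n le_rfl x (by
            rw [show I n = Set.Ioi (r n) by simp [hIdef, hn0]]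
            exact hrnx))
          (hsk n (by omega) le_rfl x (le_of_lt hrnx) (fun h => absurd h (lt_irrefl n)))
      · have hxlt : x < r (k+1) := by
          by_contra hcon
          push_neg at hcon
          have hmem : k + 1 ∈ T := by
            simp only [hT, Finset.mem_filter, Finset.mem_Icc]
            exact ⟨⟨by omega, by omega⟩, hcon⟩
          have := T.le_max' (k+1) hmem
          omega
        exact hcomb k x
          (hcore k (by omega) x hx (fun _ => hlt2) (fun _ => hxlt))
          (hσI k (by omega) x (by
            simp only [hIdef, if_neg (show k ≠ 0 by omega), if_neg (show k ≠ n by omega)]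
            exact ⟨hlt2, hxlt⟩))
          (hsk k hk1 (by omega) x (le_of_lt hlt2) (fun _ => hxlt))
end
end

section
/- Let ρ = {r₁ < … < r_n} be positive knots, let α, ν₁, …, ν_n be real values, and let σ be either σ^A (the unique Beppo Levi L₀-spline on ρ with σ(r_j) = ν_j for all j and σ(0) = α) or σ^B (the unique non-singular Beppo Levi L₀-spline on ρ with σ(r_j) = ν_j for all j). Then there exist unique coefficients c, a₁, …, a_n such that σ(r) = c + Σ_{k=1}^n a_k·φ₀(r/r_k) for all r ≥ 0; moreover, if σ = σ^B, the coefficients additionally satisfy Σ_{k=1}^n a_k·r_k^{−2} = 0. -/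
open MeasureTheory Set Filter

noncomputable section

open Real in

/-- the general kernel element -/
def pfAux (a b c d : ℂ) (x : ℝ) : ℂ :=
  a * (x:ℂ)^2 + b * (x:ℂ)^2 * (Real.log x : ℂ) + c + d * (Real.log x : ℂ)

def pfAux1 (a b d : ℂ) (x : ℝ) : ℂ :=
  a * ((2*x : ℝ):ℂ) + b * ((2*x*Real.log x + x : ℝ):ℂ) + d * ((x⁻¹ : ℝ):ℂ)

def pfAux2 (a b d : ℂ) (x : ℝ) : ℂ :=
  a * 2 + b * ((2*Real.log x + 3 : ℝ):ℂ) + d * ((-(x^2)⁻¹ : ℝ):ℂ)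

def pfAux3 (b d : ℂ) (x : ℝ) : ℂ :=
  b * ((2*x⁻¹ : ℝ):ℂ) + d * ((2*(x^3)⁻¹ : ℝ):ℂ)

def pfAux4 (b d : ℂ) (x : ℝ) : ℂ :=
  b * ((-2*(x^2)⁻¹ : ℝ):ℂ) + d * ((-6*(x^4)⁻¹ : ℝ):ℂ)

lemma hasDerivAt_pfAux (a b c d : ℂ) {x : ℝ} (hx : 0 < x) :
    HasDerivAt (pfAux a b c d) (pfAux1 a b d x) x := by
  have hx0 : x ≠ 0 := ne_of_gt hx
  have h1 : HasDerivAt (fun y : ℝ => y^2) (2*x) x := by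
    simpa using (hasDerivAt_pow 2 x)
  have hlog : HasDerivAt Real.log x⁻¹ x := Real.hasDerivAt_log hx0
  have h2 : HasDerivAt (fun y : ℝ => y^2 * Real.log y) (2*x*Real.log x + x) x := by
    have := h1.mul hlog
    refine this.congr_deriv ?_
    field_simp
  have H : HasDerivAt (fun y : ℝ => a * ((y^2:ℝ):ℂ) + b * ((y^2*Real.log y : ℝ):ℂ) + c
      + d * ((Real.log y : ℝ):ℂ)) (pfAux1 a b d x) x := by
    exact (((h1.ofReal_comp.const_mul a).add (h2.ofReal_comp.const_mul b)).add_const c).add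
      (hlog.ofReal_comp.const_mul d)
  convert H using 1
  · funext y; simp [pfAux]; push_cast; ring
lemma hasDerivAt_pfAux1 (a b d : ℂ) {x : ℝ} (hx : 0 < x) :
    HasDerivAt (pfAux1 a b d) (pfAux2 a b d x) x := by
  have hx0 : x ≠ 0 := ne_of_gt hx
  have h1 : HasDerivAt (fun y : ℝ => 2*y) (2:ℝ) x := by
    simpa using (hasDerivAt_id x).const_mul (2:ℝ)
  have hlog : HasDerivAt Real.log x⁻¹ x := Real.hasDerivAt_log hx0
  have h2 : HasDerivAt (fun y : ℝ => 2*y*Real.log y + y) (2*Real.log x + 3) x := by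
    have := ((hasDerivAt_id x).const_mul (2:ℝ)).mul hlog
    have h3 := this.add (hasDerivAt_id x)
    refine h3.congr_deriv ?_
    field_simp
    simp only [id_eq]; ring
  have hinv : HasDerivAt (fun y : ℝ => y⁻¹) (-(x^2)⁻¹) x := by
    simpa using (hasDerivAt_inv hx0)
  have H := ((h1.ofReal_comp.const_mul a).add (h2.ofReal_comp.const_mul b)).add
      (hinv.ofReal_comp.const_mul d)
  exact H
lemma hasDerivAt_pfAux2 (a b d : ℂ) {x : ℝ} (hx : 0 < x) :
    HasDerivAt (pfAux2 a b d) (pfAux3 b d x) x := by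
  have hx0 : x ≠ 0 := ne_of_gt hx
  have hlog : HasDerivAt Real.log x⁻¹ x := Real.hasDerivAt_log hx0
  have h2 : HasDerivAt (fun y : ℝ => 2*Real.log y + 3) (2*x⁻¹) x := by
    simpa using (hlog.const_mul (2:ℝ)).add_const (3:ℝ)
  have hinv : HasDerivAt (fun y : ℝ => -(y^2)⁻¹) (2*(x^3)⁻¹) x := by
    have : HasDerivAt (fun y : ℝ => (y^2)⁻¹) (-(2*x) / (x^2)^2) x := by
      have h1 : HasDerivAt (fun y : ℝ => y^2) (2*x) x := by simpa using (hasDerivAt_pow 2 x)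
      exact h1.inv (pow_ne_zero 2 hx0)
    have := this.neg
    refine this.congr_deriv ?_
    field_simp
  have H := ((hasDerivAt_const x (a*2)).add (h2.ofReal_comp.const_mul b)).add
      (hinv.ofReal_comp.const_mul d)
  exact H.congr_deriv (by simp [pfAux3])
lemma hasDerivAt_pfAux3 (b d : ℂ) {x : ℝ} (hx : 0 < x) :
    HasDerivAt (pfAux3 b d) (pfAux4 b d x) x := by
  have hx0 : x ≠ 0 := ne_of_gt hx
  have hinv : HasDerivAt (fun y : ℝ => 2*y⁻¹) (-2*(x^2)⁻¹) x := by
    have := (hasDerivAt_inv hx0).const_mul (2:ℝ)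
    refine this.congr_deriv ?_
    field_simp
  have hinv3 : HasDerivAt (fun y : ℝ => 2*(y^3)⁻¹) (-6*(x^4)⁻¹) x := by
    have h1 : HasDerivAt (fun y : ℝ => y^3) (3*x^2) x := by simpa using (hasDerivAt_pow 3 x)
    have := (h1.inv (pow_ne_zero 3 hx0)).const_mul (2:ℝ)
    refine this.congr_deriv ?_
    field_simp; ring
  have H := (hinv.ofReal_comp.const_mul b).add (hinv3.ofReal_comp.const_mul d)
  exact H
lemma deriv_zero_on {f g : ℝ → ℂ} {s : Set ℝ} (hs : IsOpen s) (hsub : s ⊆ Set.Ioi 0)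
    (hf : ∀ x ∈ s, f x = 0) (hd : ∀ x ∈ s, HasDerivAt f (g x) x) :
    ∀ x ∈ s, g x = 0 := by
  intro x hx
  have hev : f =ᶠ[nhds x] (fun _ => 0) := by
    filter_upwards [hs.mem_nhds hx] with y hy using hf y hy
  have h0 : HasDerivAt f 0 x := (hasDerivAt_const x (0:ℂ)).congr_of_eventuallyEq hev
  exact (hd x hx).unique h0

lemma indep_pfAux {u v : ℝ} (hu : 0 ≤ u) (huv : u < v) {a b c d : ℂ}
    (h : ∀ x ∈ Set.Ioo u v, pfAux a b c d x = 0) :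
    a = 0 ∧ b = 0 ∧ c = 0 ∧ d = 0 := by
  have hopen : IsOpen (Set.Ioo u v) := isOpen_Ioo
  have hsub : Set.Ioo u v ⊆ Set.Ioi 0 := fun x hx => lt_of_le_of_lt hu hx.1
  have h1 : ∀ x ∈ Set.Ioo u v, pfAux1 a b d x = 0 :=
    deriv_zero_on hopen hsub h (fun x hx => hasDerivAt_pfAux a b c d (hsub hx))
  have h2 : ∀ x ∈ Set.Ioo u v, pfAux2 a b d x = 0 :=
    deriv_zero_on hopen hsub h1 (fun x hx => hasDerivAt_pfAux1 a b d (hsub hx))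
  have h3 : ∀ x ∈ Set.Ioo u v, pfAux3 b d x = 0 :=
    deriv_zero_on hopen hsub h2 (fun x hx => hasDerivAt_pfAux2 a b d (hsub hx))
  have h4 : ∀ x ∈ Set.Ioo u v, pfAux4 b d x = 0 :=
    deriv_zero_on hopen hsub h3 (fun x hx => hasDerivAt_pfAux3 b d (hsub hx))
  set x : ℝ := (u+v)/2 with hxdef
  have hxm : x ∈ Set.Ioo u v := ⟨by simp [hxdef]; linarith, by simp [hxdef]; linarith⟩
  have hx : (0:ℝ) < x := hsub hxm
  have hx0 : (x:ℂ) ≠ 0 := by exact_mod_cast ne_of_gt hx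
  have e0 := h x hxm
  have e2 := h2 x hxm
  have e3 := h3 x hxm
  have e4 := h4 x hxm
  simp only [pfAux, pfAux2, pfAux3, pfAux4] at e0 e2 e3 e4
  push_cast at e0 e2 e3 e4
  have hbd : b * (x:ℂ)^2 + d = 0 := by
    have := e3
    field_simp at this
    have h' : (2*(x:ℂ)) * (b * (x:ℂ)^2 + d) = 0 := by linear_combination (x:ℂ) * this
    exact (mul_eq_zero.mp h').resolve_left (by simp [hx0])
  have hbd3 : b * (x:ℂ)^2 + 3*d = 0 := by
    field_simp at e4
    have h' : (2*(x:ℂ)^2) * (b * (x:ℂ)^2 + 3*d) = 0 := by linear_combination -(x:ℂ)^2 * e4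
    exact (mul_eq_zero.mp h').resolve_left (by simp [hx0])
  have hd0 : d = 0 := by linear_combination (hbd3 - hbd) / 2
  have hb0 : b = 0 := by
    have : b * (x:ℂ)^2 = 0 := by linear_combination hbd - hd0
    rcases mul_eq_zero.mp this with h | h
    · exact h
    · exact absurd h (pow_ne_zero 2 hx0)
  have ha0 : a = 0 := by
    rw [hb0, hd0] at e2
    simpa using e2
  have hc0 : c = 0 := by
    rw [ha0, hb0, hd0] at e0
    simpa using e0
  exact ⟨ha0, hb0, hc0, hd0⟩
lemma lim_match {F G : ℝ → ℂ} {s : Set ℝ} {t : ℝ} {y z : ℂ}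
    (hne : (nhdsWithin t s).NeBot)
    (hF : Filter.Tendsto F (nhdsWithin t s) (nhds y))
    (hG : Filter.Tendsto G (nhdsWithin t s) (nhds z))
    (heq : Set.EqOn F G s) : y = z := by
  have hG' : Filter.Tendsto G (nhdsWithin t s) (nhds y) :=
    hF.congr' (by filter_upwards [self_mem_nhdsWithin] with x hx using heq hx)
  exact tendsto_nhds_unique hG' hG

lemma neBot_Ioo_left {u t : ℝ} (hut : u < t) : (nhdsWithin t (Set.Ioo u t)).NeBot :=
  mem_closure_iff_nhdsWithin_neBot.mp (by rw [closure_Ioo hut.ne]; exact ⟨hut.le, le_rfl⟩)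

lemma neBot_Ioo_right {t v : ℝ} (htv : t < v) : (nhdsWithin t (Set.Ioo t v)).NeBot :=
  mem_closure_iff_nhdsWithin_neBot.mp (by rw [closure_Ioo htv.ne]; exact ⟨le_rfl, htv.le⟩)

/-- matching of value and two derivatives of a C² function with a pfAux piece, one side -/
lemma side_match {σ : ℝ → ℂ} (hσ : ContDiffOn ℝ 2 σ (Set.Ioi 0))
    {s : Set ℝ} (hopen : IsOpen s) (hsub : s ⊆ Set.Ioi 0)
    {t : ℝ} (ht : 0 < t) (hne : (nhdsWithin t s).NeBot)
    {a b c d : ℂ} (hL : ∀ x ∈ s, σ x = pfAux a b c d x) :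
    σ t = pfAux a b c d t ∧ deriv σ t = pfAux1 a b d t ∧
      deriv (deriv σ) t = pfAux2 a b d t := by
  have hd1 : Set.EqOn (deriv σ) (pfAux1 a b d) s := by
    intro x hx
    have hev : σ =ᶠ[nhds x] pfAux a b c d := by
      filter_upwards [hopen.mem_nhds hx] with y hy using hL y hy
    rw [hev.deriv_eq]
    exact (hasDerivAt_pfAux a b c d (hsub hx)).deriv
  have hd2 : Set.EqOn (deriv (deriv σ)) (pfAux2 a b d) s := by
    intro x hx
    have hev : deriv σ =ᶠ[nhds x] pfAux1 a b d := by
      filter_upwards [hopen.mem_nhds hx] with y hy using hd1 hy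
    rw [hev.deriv_eq]
    exact (hasDerivAt_pfAux1 a b d (hsub hx)).deriv
  have hc0 : ContinuousOn σ (Set.Ioi 0) := hσ.continuousOn
  have hc1 : ContinuousOn (deriv σ) (Set.Ioi 0) :=
    hσ.continuousOn_deriv_of_isOpen isOpen_Ioi (by norm_num)
  have hσ' : ContDiffOn ℝ 1 (deriv σ) (Set.Ioi 0) :=
    hσ.deriv_of_isOpen isOpen_Ioi (by norm_num)
  have hc2 : ContinuousOn (deriv (deriv σ)) (Set.Ioi 0) :=
    hσ'.continuousOn_deriv_of_isOpen isOpen_Ioi le_rfl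
  have key : ∀ (F G : ℝ → ℂ), ContinuousOn F (Set.Ioi 0) → ContinuousAt G t →
      Set.EqOn F G s → F t = G t := by
    intro F G hF hG heq
    refine lim_match hne ?_ ?_ heq
    · exact ((hF.continuousWithinAt (Set.mem_Ioi.mpr ht)).mono_left
        (nhdsWithin_mono t hsub))
    · exact hG.mono_left nhdsWithin_le_nhds
  refine ⟨key _ _ hc0 (hasDerivAt_pfAux a b c d ht).continuousAt hL, ?_, ?_⟩
  · exact key _ _ hc1 (hasDerivAt_pfAux1 a b d ht).continuousAt hd1
  · exact key _ _ hc2 (hasDerivAt_pfAux2 a b d ht).continuousAt hd2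

lemma knot_solve {t : ℝ} (ht : 0 < t) {a b c d a' b' c' d' : ℂ}
    (h0 : pfAux a b c d t = pfAux a' b' c' d' t)
    (h1 : pfAux1 a b d t = pfAux1 a' b' d' t)
    (h2 : pfAux2 a b d t = pfAux2 a' b' d' t) :
    a' - a = -((Real.log t : ℂ) + 1) * (b' - b) ∧
    d' - d = (t:ℂ)^2 * (b' - b) ∧
    c' - c = (t:ℂ)^2 * (1 - (Real.log t : ℂ)) * (b' - b) := by
  have hT : (t:ℂ) ≠ 0 := by exact_mod_cast ne_of_gt ht
  simp only [pfAux, pfAux1, pfAux2] at h0 h1 h2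
  push_cast at h0 h1 h2
  field_simp at h1 h2
  have hd : d' - d = (t:ℂ)^2 * (b' - b) := by linear_combination (h2 - h1)/2
  have ha : a' - a = -((Real.log t : ℂ) + 1) * (b' - b) := by
    have h' : (4*(t:ℂ)^2) * (a' - a + ((Real.log t : ℂ)+1) * (b' - b)) = 0 := by
      linear_combination -h1 - h2
    have := (mul_eq_zero.mp h').resolve_left (by simp [hT])
    linear_combination this
  refine ⟨ha, hd, ?_⟩
  linear_combination -h0 - (t:ℂ)^2*ha - (Real.log t : ℂ)*hd
lemma phi0_zero : phi0 0 = 0 := by simp [phi0]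

lemma phi0_eval_le {x ρ : ℝ} (hx : 0 < x) (hρ : 0 < ρ) (h : x ≤ ρ) :
    phi0 (x/ρ) = (x/ρ)^2 * (1 - Real.log x + Real.log ρ) := by
  have h1 : x/ρ ≤ 1 := (div_le_one hρ).mpr h
  rw [phi0, if_pos h1, Real.log_div (ne_of_gt hx) (ne_of_gt hρ)]
  ring

lemma phi0_eval_gt {x ρ : ℝ} (hρ : 0 < ρ) (h : ρ < x) :
    phi0 (x/ρ) = 1 + Real.log x - Real.log ρ := by
  have hx : 0 < x := lt_trans hρ h
  have h1 : ¬ (x/ρ ≤ 1) := by rw [div_le_one hρ]; exact not_le.mpr h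
  rw [phi0, if_neg h1, Real.log_div (ne_of_gt hx) (ne_of_gt hρ)]
  ring

lemma tendsto_sq_mul_log : Filter.Tendsto (fun x : ℝ => x^2 * Real.log x)
    (nhdsWithin 0 (Set.Ioi 0)) (nhds 0) := by
  have h := tendsto_log_mul_rpow_nhdsGT_zero (r := 2) (by norm_num)
  refine h.congr' ?_
  filter_upwards [self_mem_nhdsWithin] with x hx
  rw [Real.rpow_two]
  ring

lemma tele (g : ℕ → ℂ) (f : ℕ → ℂ) {j n : ℕ} (hj : j ≤ n)
    (hf : ∀ i, j ≤ i → i < n → f i = g (i+1) - g i) :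
    ∑ i ∈ Finset.Ico j n, f i = g n - g j := by
  induction n with
  | zero => interval_cases j; simp
  | succ m ih =>
    rcases Nat.lt_or_ge j (m+1) with hlt | hge
    · have hjm : j ≤ m := Nat.lt_succ_iff.mp hlt
      rw [Finset.sum_Ico_succ_top hjm, ih hjm (fun i h1 h2 => hf i h1 (Nat.lt_succ_of_lt h2)),
        hf m hjm (Nat.lt_succ_self m)]
      ring
    · have : j = m+1 := le_antisymm hj hge
      subst this; simp

lemma split_sum (n j : ℕ) (hj : j ≤ n) (u w : ℕ → ℂ) :
    (∑ k : Fin n, (if (k:ℕ)+1 ≤ j then u (k:ℕ) else w (k:ℕ))) =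
      (∑ i ∈ Finset.Ico 0 j, u i) + ∑ i ∈ Finset.Ico j n, w i := by
  rw [Fin.sum_univ_eq_sum_range (fun i => if i+1 ≤ j then u i else w i) n]
  rw [Finset.range_eq_Ico, ← Finset.sum_Ico_consecutive _ (Nat.zero_le j) hj]
  congr 1
  · exact Finset.sum_congr rfl (fun i hi => if_pos (Nat.succ_le_of_lt (Finset.mem_Ico.mp hi).2))
  · exact Finset.sum_congr rfl (fun i hi => if_neg (by
      have := (Finset.mem_Ico.mp hi).1; omega))

lemma sumEval {n j : ℕ} (r : ℕ → ℝ) (v : Fin n → ℂ) {x : ℝ} (hx : 0 < x)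
    (hρ : ∀ k : Fin n, 0 < r ((k:ℕ)+1))
    (hlow : ∀ k : Fin n, (k:ℕ)+1 ≤ j → r ((k:ℕ)+1) < x)
    (hhigh : ∀ k : Fin n, j < (k:ℕ)+1 → x ≤ r ((k:ℕ)+1)) :
    ∑ k : Fin n, v k * ((phi0 (x / r ((k:ℕ)+1)) : ℝ) : ℂ) =
      pfAux
        (∑ k : Fin n, if (k:ℕ)+1 ≤ j then 0 else
            v k * (((1+Real.log (r ((k:ℕ)+1)))/(r ((k:ℕ)+1))^2 : ℝ):ℂ))
        (∑ k : Fin n, if (k:ℕ)+1 ≤ j then 0 else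
            -(v k * ((((r ((k:ℕ)+1))^2)⁻¹ : ℝ):ℂ)))
        (∑ k : Fin n, if (k:ℕ)+1 ≤ j then v k * ((1 - Real.log (r ((k:ℕ)+1)) : ℝ):ℂ) else 0)
        (∑ k : Fin n, if (k:ℕ)+1 ≤ j then v k else 0) x := by
  rw [pfAux]
  rw [Finset.sum_mul, Finset.sum_mul, Finset.sum_mul, Finset.sum_mul]
  rw [← Finset.sum_add_distrib, ← Finset.sum_add_distrib, ← Finset.sum_add_distrib]
  refine Finset.sum_congr rfl (fun k _ => ?_)
  rcases le_or_gt ((k:ℕ)+1) j with hk | hk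
  · rw [if_pos hk, if_pos hk, if_pos hk, if_pos hk,
      phi0_eval_gt (hρ k) (hlow k hk)]
    push_cast
    ring
  · rw [if_neg (not_le.mpr hk), if_neg (not_le.mpr hk), if_neg (not_le.mpr hk),
      if_neg (not_le.mpr hk), phi0_eval_le hx (hρ k) (hhigh k hk)]
    have hρ0 : ((r ((k:ℕ)+1) : ℝ) : ℂ) ≠ 0 := by exact_mod_cast ne_of_gt (hρ k)
    push_cast
    field_simp
    ring

/-- unique representation of the interpolants `σ^A`/`σ^B` as
`σ(r) = c + Σ_{k=1}^n a_k·φ₀(r/r_k)`; moreover in the non-singular case the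
coefficients satisfy `Σ_{k=1}^n a_k·r_k^{−2} = 0`. -/
theorem stmt10 (n : ℕ) (r : ℕ → ℝ) (hn : 1 ≤ n) (hpos : 0 < r 1)
    (hmono : ∀ j, 1 ≤ j → j < n → r j < r (j + 1))
    (α : ℝ) (ν : ℕ → ℝ) (σ : ℝ → ℂ)
    (hσ : IsBLSpline n r σ)
    (hint : ∀ j, 1 ≤ j → j ≤ n → σ (r j) = (ν j : ℂ))
    (hAB : σ 0 = (α : ℂ) ∨ NonSingularBLS (r 1) σ) :
    (∃! p : ℂ × (Fin n → ℂ), ∀ x ∈ Set.Ici (0:ℝ),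
        σ x = p.1 + ∑ k : Fin n, p.2 k * (phi0 (x / r ((k : ℕ) + 1)) : ℂ)) ∧
    (NonSingularBLS (r 1) σ → ∀ p : ℂ × (Fin n → ℂ),
        (∀ x ∈ Set.Ici (0:ℝ),
          σ x = p.1 + ∑ k : Fin n, p.2 k * (phi0 (x / r ((k : ℕ) + 1)) : ℂ)) →
        ∑ k : Fin n, p.2 k * ((r ((k : ℕ) + 1) : ℂ)) ^ (-2 : ℤ) = 0) := by
  classical
  -- basic knot facts
  have rpos : ∀ j, 1 ≤ j → j ≤ n → 0 < r j := by
    intro j h1 h2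
    induction j with
    | zero => omega
    | succ m ih =>
      rcases Nat.eq_zero_or_pos m with rfl | hm
      · exact hpos
      · have h3 := hmono m hm (by omega)
        have h4 := ih hm (by omega)
        linarith
  have rmono : ∀ j k, 1 ≤ j → j ≤ k → k ≤ n → r j ≤ r k := by
    intro j k h1 h2 h3
    induction k with
    | zero => omega
    | succ m ih =>
      rcases Nat.lt_or_ge j (m+1) with hlt | hge
      · have hjm : j ≤ m := by omega
        have h5 := hmono m (by omega) (by omega)
        have h6 := ih hjm (by omega)
        linarith
      · have : j = m+1 := by omega
        subst this; rfl
  have hρall : ∀ k : Fin n, 0 < r ((k:ℕ)+1) := fun k => rpos _ (by omega) (by omega)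
  have hρall' : ∀ k : Fin n, ((r ((k:ℕ)+1) : ℝ) : ℂ) ≠ 0 :=
    fun k => by exact_mod_cast ne_of_gt (hρall k)
  -- extract piecewise coefficients
  choose! A B C D hP using hσ.pieces
  obtain ⟨a₀, b₀, c₀, hLp⟩ := hσ.left
  obtain ⟨cN, dN, hRp⟩ := hσ.right
  set A' : ℕ → ℂ := fun j => if j = 0 then a₀ else if j = n then 0 else A j with hA'
  set B' : ℕ → ℂ := fun j => if j = 0 then b₀ else if j = n then 0 else B j with hB'
  set C' : ℕ → ℂ := fun j => if j = 0 then c₀ else if j = n then cN else C j with hC'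
  set D' : ℕ → ℂ := fun j => if j = 0 then 0 else if j = n then dN else D j with hD'
  set rr : ℕ → ℝ := fun j => if j = 0 then 0 else if j ≤ n then r j else r n + 1 with hrrd
  have hrrn : ∀ j, 1 ≤ j → j ≤ n → rr j = r j := by
    intro j h1 h2
    have h0 : j ≠ 0 := by omega
    simp [hrrd, h0, h2]
  have hrr0 : ∀ j, 0 ≤ rr j := by
    intro j
    by_cases h0 : j = 0
    · simp [hrrd, h0]
    · by_cases h1 : j ≤ n
      · simp [hrrd, h0, h1]; exact (rpos j (by omega) h1).le
      · simp [hrrd, h0, h1]; have := rpos n (by omega) le_rfl; linarith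
  have hrrmono : ∀ j, j ≤ n → rr j < rr (j+1) := by
    intro j hj
    by_cases h0 : j = 0
    · subst h0
      rw [hrrn 1 le_rfl hn]
      simpa [hrrd] using hpos
    · rw [hrrn j (by omega) hj]
      by_cases hjn : j = n
      · have hh : ¬ (n + 1 ≤ n) := by omega
        rw [hjn]
        simp [hrrd, hh]
      · rw [hrrn (j+1) (by omega) (by omega)]
        exact hmono j (by omega) (by omega)
  -- the pieces in pfAux form
  have hpiece : ∀ j, j ≤ n → ∀ x ∈ Set.Ioo (rr j) (rr (j+1)),
      σ x = pfAux (A' j) (B' j) (C' j) (D' j) x := by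
    intro j hj x hx
    by_cases h0 : j = 0
    · subst h0
      have hx' : x ∈ Set.Ioo (0:ℝ) (r 1) := by
        rwa [show rr 0 = 0 by simp [hrrd], hrrn 1 le_rfl hn] at hx
      rw [hLp x hx']
      simp [pfAux, A', B', C', D']
    · by_cases hjn : j = n
      · have hx' : x ∈ Set.Ioi (r n) := by
          have h := hx.1; rw [hrrn j (by omega) hj, hjn] at h; exact h
        rw [hRp x hx']
        simp [pfAux, A', B', C', D', h0, hjn, show n ≠ 0 by omega]
      · have h1 : 1 ≤ j := by omega
        have h2 : j + 1 ≤ n := by omega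
        have hx' : x ∈ Set.Ioo (r j) (r (j+1)) := by
          rwa [hrrn j h1 hj, hrrn (j+1) (by omega) h2] at hx
        rw [hP j h1 h2 x hx']
        simp [pfAux, A', B', C', D', h0, hjn, show j ≠ n by omega]
  -- knot matching
  have hknot : ∀ j, 1 ≤ j → j ≤ n →
      (σ (r j) = pfAux (A' (j-1)) (B' (j-1)) (C' (j-1)) (D' (j-1)) (r j)) ∧
      (A' j - A' (j-1) = -((Real.log (r j) : ℂ) + 1) * (B' j - B' (j-1)) ∧
       D' j - D' (j-1) = ((r j : ℝ):ℂ)^2 * (B' j - B' (j-1)) ∧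
       C' j - C' (j-1) = ((r j : ℝ):ℂ)^2 * (1 - (Real.log (r j) : ℂ)) * (B' j - B' (j-1))) := by
    intro j h1 h2
    have hj1 : j - 1 + 1 = j := by omega
    have htpos : 0 < r j := rpos j h1 h2
    have hrrj : rr j = r j := hrrn j h1 h2
    have hLmem : (nhdsWithin (r j) (Set.Ioo (rr (j-1)) (rr j))).NeBot := by
      have h := hrrmono (j-1) (by omega)
      rw [hj1] at h
      rw [← hrrj]
      exact neBot_Ioo_left h
    have hRmem : (nhdsWithin (r j) (Set.Ioo (rr j) (rr (j+1)))).NeBot := by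
      rw [← hrrj]
      exact neBot_Ioo_right (hrrmono j h2)
    have hsubL : Set.Ioo (rr (j-1)) (rr j) ⊆ Set.Ioi 0 :=
      fun y hy => lt_of_le_of_lt (hrr0 (j-1)) hy.1
    have hsubR : Set.Ioo (rr j) (rr (j+1)) ⊆ Set.Ioi 0 :=
      fun y hy => lt_of_le_of_lt (hrr0 j) hy.1
    have hpieceL := hpiece (j-1) (by omega)
    rw [hj1] at hpieceL
    have hML := side_match hσ.smooth isOpen_Ioo hsubL htpos hLmem hpieceL
    have hMR := side_match hσ.smooth isOpen_Ioo hsubR htpos hRmem (hpiece j h2)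
    refine ⟨hML.1, knot_solve htpos (hML.1.symm.trans hMR.1)
      (hML.2.1.symm.trans hMR.2.1) (hML.2.2.symm.trans hMR.2.2)⟩
  -- the candidate coefficients
  set aN : ℕ → ℂ := fun k => ((r k : ℝ):ℂ)^2 * (B' k - B' (k-1)) with haN
  set aF : Fin n → ℂ := fun k => aN ((k:ℕ)+1) with haF
  set cc : ℂ := C' 0 with hccd
  have hBn : B' n = 0 := by simp [hB', show n ≠ 0 by omega]
  have hAn : A' n = 0 := by simp [hA', show n ≠ 0 by omega]
  have hD0 : D' 0 = 0 := by simp [hD']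
  -- coefficient identities
  have hBB : ∀ j, j ≤ n →
      (∑ k : Fin n, if (k:ℕ)+1 ≤ j then 0 else
          -(aF k * ((((r ((k:ℕ)+1))^2)⁻¹ : ℝ):ℂ))) = B' j := by
    intro j hj
    rw [split_sum n j hj (fun _ => 0) (fun i => -(aN (i+1) * ((((r (i+1))^2)⁻¹ : ℝ):ℂ)))]
    rw [Finset.sum_const_zero, zero_add]
    rw [tele (fun i => -B' i) _ hj (fun i hji hin => ?_)]
    · simp [hBn]
    · have hρ : ((r (i+1) : ℝ):ℂ) ≠ 0 := by
        exact_mod_cast ne_of_gt (rpos (i+1) (by omega) (by omega))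
      simp only [haN, Nat.add_sub_cancel]
      push_cast
      field_simp
      ring
  have hAA : ∀ j, j ≤ n →
      (∑ k : Fin n, if (k:ℕ)+1 ≤ j then 0 else
          aF k * (((1+Real.log (r ((k:ℕ)+1)))/(r ((k:ℕ)+1))^2 : ℝ):ℂ)) = A' j := by
    intro j hj
    rw [split_sum n j hj (fun _ => 0)
      (fun i => aN (i+1) * (((1+Real.log (r (i+1)))/(r (i+1))^2 : ℝ):ℂ))]
    rw [Finset.sum_const_zero, zero_add]
    rw [tele (fun i => -A' i) _ hj (fun i hji hin => ?_)]
    · simp [hAn]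
    · have hρ : ((r (i+1) : ℝ):ℂ) ≠ 0 := by
        exact_mod_cast ne_of_gt (rpos (i+1) (by omega) (by omega))
      have hrel := ((hknot (i+1) (by omega) (by omega)).2.1)
      rw [Nat.add_sub_cancel] at hrel
      simp only [haN, Nat.add_sub_cancel]
      push_cast
      rw [div_eq_mul_inv]
      field_simp
      linear_combination hrel
  have hDD : ∀ j, j ≤ n →
      (∑ k : Fin n, if (k:ℕ)+1 ≤ j then aF k else 0) = D' j := by
    intro j hj
    rw [split_sum n j hj (fun i => aN (i+1)) (fun _ => 0)]
    rw [Finset.sum_const_zero, add_zero]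
    rw [tele D' _ (Nat.zero_le j) (fun i hji hin => ?_)]
    · simp [hD0]
    · have hrel := ((hknot (i+1) (by omega) (by omega)).2.2.1)
      rw [Nat.add_sub_cancel] at hrel
      simp only [haN, Nat.add_sub_cancel]
      linear_combination -hrel
  have hCC : ∀ j, j ≤ n →
      cc + (∑ k : Fin n, if (k:ℕ)+1 ≤ j then
          aF k * ((1 - Real.log (r ((k:ℕ)+1)) : ℝ):ℂ) else 0) = C' j := by
    intro j hj
    rw [split_sum n j hj (fun i => aN (i+1) * ((1 - Real.log (r (i+1)) : ℝ):ℂ)) (fun _ => 0)]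
    rw [Finset.sum_const_zero, add_zero]
    rw [tele C' _ (Nat.zero_le j) (fun i hji hin => ?_)]
    · simp [hccd]
    · have hrel := ((hknot (i+1) (by omega) (by omega)).2.2.2)
      rw [Nat.add_sub_cancel] at hrel
      simp only [haN, Nat.add_sub_cancel]
      push_cast
      linear_combination -hrel
  -- main per-point evaluation
  have hfinal : ∀ (j : ℕ), j ≤ n → ∀ x : ℝ, 0 < x →
      (∀ k : Fin n, (k:ℕ)+1 ≤ j → r ((k:ℕ)+1) < x) →
      (∀ k : Fin n, j < (k:ℕ)+1 → x ≤ r ((k:ℕ)+1)) →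
      σ x = pfAux (A' j) (B' j) (C' j) (D' j) x →
      σ x = cc + ∑ k : Fin n, aF k * ((phi0 (x / r ((k:ℕ)+1)) : ℝ):ℂ) := by
    intro j hj x hx hlow hhigh hσx
    rw [hσx, sumEval r aF hx hρall hlow hhigh, hAA j hj, hBB j hj, hDD j hj]
    have h4 := hCC j hj
    simp only [pfAux]
    linear_combination -h4
  -- value at 0
  have hσ0 : σ 0 = cc := by
    have hne : (nhdsWithin (0:ℝ) (Set.Ioo (0:ℝ) (r 1))).NeBot := neBot_Ioo_right hpos
    have hF : Filter.Tendsto σ (nhdsWithin 0 (Set.Ioo (0:ℝ) (r 1))) (nhds (σ 0)) :=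
      hσ.cont0.mono_left (nhdsWithin_mono _ (fun y hy => le_of_lt hy.1))
    have hG : Filter.Tendsto (pfAux a₀ b₀ c₀ 0) (nhdsWithin 0 (Set.Ioo (0:ℝ) (r 1)))
        (nhds c₀) := by
      have h1 : Filter.Tendsto (fun x : ℝ => x^2) (nhdsWithin 0 (Set.Ioo (0:ℝ) (r 1)))
          (nhds 0) := by
        have h := (continuous_pow 2).tendsto (0:ℝ)
        simpa using h.mono_left nhdsWithin_le_nhds
      have h2 : Filter.Tendsto (fun x : ℝ => x^2 * Real.log x)
          (nhdsWithin 0 (Set.Ioo (0:ℝ) (r 1))) (nhds 0) :=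
        tendsto_sq_mul_log.mono_left (nhdsWithin_mono _ (fun y hy => hy.1))
      have h1c := (Complex.continuous_ofReal.tendsto 0).comp h1
      have h2c := (Complex.continuous_ofReal.tendsto 0).comp h2
      have hcomb := ((h1c.const_mul a₀).add (h2c.const_mul b₀)).add_const c₀
      have hcomb2 : Filter.Tendsto (pfAux a₀ b₀ c₀ 0)
          (nhdsWithin 0 (Set.Ioo (0:ℝ) (r 1))) (nhds (a₀*((0:ℝ):ℂ) + b₀*((0:ℝ):ℂ) + c₀)) :=
        hcomb.congr (fun x => by simp [pfAux]; push_cast; ring)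
      simpa using hcomb2
    have heq : Set.EqOn σ (pfAux a₀ b₀ c₀ 0) (Set.Ioo (0:ℝ) (r 1)) := by
      intro x hx
      rw [hLp x hx]
      simp [pfAux]
    have h := lim_match hne hF hG heq
    rw [h, hccd]
    simp [hC']
  -- the representation
  have hrep : ∀ x ∈ Set.Ici (0:ℝ),
      σ x = cc + ∑ k : Fin n, aF k * ((phi0 (x / r ((k:ℕ)+1)) : ℝ):ℂ) := by
    intro x hx
    rcases eq_or_lt_of_le (Set.mem_Ici.mp hx) with h0 | hxpos
    · rw [← h0, hσ0]
      simp [phi0_zero]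
    · rcases le_or_gt x (r n) with hxle | hxgt
      · have hex : ∃ k, k + 1 ≤ n ∧ x ≤ r (k+1) := ⟨n-1, by omega, by
          have hn1 : n - 1 + 1 = n := by omega
          rw [hn1]; exact hxle⟩
        obtain ⟨hm1, hm2⟩ := Nat.find_spec hex
        have hmin : ∀ k, k < Nat.find hex → ¬(k + 1 ≤ n ∧ x ≤ r (k+1)) :=
          fun k hk => Nat.find_min hex hk
        set m := Nat.find hex with hm
        have hmn : m ≤ n := by omega
        have hlow : ∀ k : Fin n, (k:ℕ)+1 ≤ m → r ((k:ℕ)+1) < x := by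
          intro k hk
          have h := hmin (k:ℕ) (by omega)
          push_neg at h
          exact h (by omega)
        have hhigh : ∀ k : Fin n, m < (k:ℕ)+1 → x ≤ r ((k:ℕ)+1) := by
          intro k hk
          exact le_trans hm2 (rmono (m+1) ((k:ℕ)+1) (by omega) (by omega) (by omega))
        refine hfinal m hmn x hxpos hlow hhigh ?_
        rcases eq_or_lt_of_le hm2 with heq | hlt
        · have hv := (hknot (m+1) (by omega) (by omega)).1
          rw [Nat.add_sub_cancel] at hv
          rw [heq]
          exact hv
        · refine hpiece m hmn x ⟨?_, ?_⟩
          · by_cases hm0 : m = 0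
            · rw [hm0]; simpa [hrrd] using hxpos
            · rw [hrrn m (by omega) hmn]
              have h := hmin (m-1) (by omega)
              push_neg at h
              have h2 := h (by omega)
              have hmm : m - 1 + 1 = m := by omega
              rwa [hmm] at h2
          · rw [hrrn (m+1) (by omega) (by omega)]; exact hlt
      · refine hfinal n le_rfl x hxpos
          (fun k hk => lt_of_le_of_lt (rmono _ n (by omega) (by omega) le_rfl) hxgt)
          (fun k hk => absurd hk (by omega)) ?_
        rw [hRp x hxgt]
        simp [pfAux, hA', hB', hC', hD', show n ≠ 0 by omega]
  -- uniqueness of representations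
  have huniq : ∀ p q : ℂ × (Fin n → ℂ),
      (∀ x ∈ Set.Ici (0:ℝ),
        σ x = p.1 + ∑ k : Fin n, p.2 k * ((phi0 (x / r ((k:ℕ)+1)) : ℝ):ℂ)) →
      (∀ x ∈ Set.Ici (0:ℝ),
        σ x = q.1 + ∑ k : Fin n, q.2 k * ((phi0 (x / r ((k:ℕ)+1)) : ℝ):ℂ)) →
      p = q := by
    intro p q hp hq
    set w : Fin n → ℂ := fun k => p.2 k - q.2 k with hwdef
    set wN : ℕ → ℂ := fun i => if h : i < n then
        w ⟨i, h⟩ * ((((r (i+1))^2)⁻¹ : ℝ):ℂ) else 0 with hwN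
    have hTj : ∀ j, j < n →
        ((∑ i ∈ Finset.Ico j n, -(wN i)) = 0 ∧ (j = 0 → p.1 - q.1 = 0)) := by
      intro j hjn
      have hlow : ∀ k : Fin n, (k:ℕ)+1 ≤ j → ∀ x ∈ Set.Ioo (rr j) (rr (j+1)),
          r ((k:ℕ)+1) < x := by
        intro k hk x hx
        have h1 : r ((k:ℕ)+1) ≤ r j := rmono _ j (by omega) hk (by omega)
        have h2 : rr j < x := hx.1
        rw [hrrn j (by omega) (by omega)] at h2
        linarith
      have hhigh : ∀ k : Fin n, j < (k:ℕ)+1 → ∀ x ∈ Set.Ioo (rr j) (rr (j+1)),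
          x ≤ r ((k:ℕ)+1) := by
        intro k hk x hx
        have h1 : r (j+1) ≤ r ((k:ℕ)+1) := rmono (j+1) _ (by omega) (by omega) (by omega)
        have h2 : x < rr (j+1) := hx.2
        rw [hrrn (j+1) (by omega) (by omega)] at h2
        linarith
      have hEq : ∀ x ∈ Set.Ioo (rr j) (rr (j+1)), pfAux
          ((∑ k : Fin n, if (k:ℕ)+1 ≤ j then 0 else
              p.2 k * (((1+Real.log (r ((k:ℕ)+1)))/(r ((k:ℕ)+1))^2 : ℝ):ℂ)) -
           (∑ k : Fin n, if (k:ℕ)+1 ≤ j then 0 else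
              q.2 k * (((1+Real.log (r ((k:ℕ)+1)))/(r ((k:ℕ)+1))^2 : ℝ):ℂ)))
          ((∑ k : Fin n, if (k:ℕ)+1 ≤ j then 0 else
              -(p.2 k * ((((r ((k:ℕ)+1))^2)⁻¹ : ℝ):ℂ))) -
           (∑ k : Fin n, if (k:ℕ)+1 ≤ j then 0 else
              -(q.2 k * ((((r ((k:ℕ)+1))^2)⁻¹ : ℝ):ℂ))))
          ((∑ k : Fin n, if (k:ℕ)+1 ≤ j then
              p.2 k * ((1 - Real.log (r ((k:ℕ)+1)) : ℝ):ℂ) else 0) + p.1 -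
           (∑ k : Fin n, if (k:ℕ)+1 ≤ j then
              q.2 k * ((1 - Real.log (r ((k:ℕ)+1)) : ℝ):ℂ) else 0) - q.1)
          ((∑ k : Fin n, if (k:ℕ)+1 ≤ j then p.2 k else 0) -
           (∑ k : Fin n, if (k:ℕ)+1 ≤ j then q.2 k else 0)) x = 0 := by
        intro x hx
        have hx0 : 0 < x := lt_of_le_of_lt (hrr0 j) hx.1
        have h1 := hp x (le_of_lt hx0)
        have h2 := hq x (le_of_lt hx0)
        rw [sumEval (j := j) r p.2 hx0 hρall (fun k hk => hlow k hk x hx)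
          (fun k hk => hhigh k hk x hx)] at h1
        rw [sumEval (j := j) r q.2 hx0 hρall (fun k hk => hlow k hk x hx)
          (fun k hk => hhigh k hk x hx)] at h2
        have h3 := h1.symm.trans h2
        simp only [pfAux] at h3 ⊢
        linear_combination h3
      have hind := indep_pfAux (hrr0 j) (hrrmono j (by omega)) hEq
      constructor
      · have hb := hind.2.1
        have hc1 : (∑ k : Fin n, if (k:ℕ)+1 ≤ j then 0 else
            -(p.2 k * ((((r ((k:ℕ)+1))^2)⁻¹ : ℝ):ℂ))) -
           (∑ k : Fin n, if (k:ℕ)+1 ≤ j then 0 else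
            -(q.2 k * ((((r ((k:ℕ)+1))^2)⁻¹ : ℝ):ℂ))) =
           ∑ k : Fin n, (if (k:ℕ)+1 ≤ j then 0 else -(wN (k:ℕ))) := by
          rw [← Finset.sum_sub_distrib]
          refine Finset.sum_congr rfl (fun k _ => ?_)
          rcases le_or_gt ((k:ℕ)+1) j with hk | hk
          · simp [hk]
          · simp only [if_neg (not_le.mpr hk), hwN, dif_pos k.isLt, hwdef, Fin.eta]
            ring
        rw [hc1] at hb
        rw [split_sum n j (by omega) (fun _ => 0) (fun i => -(wN i))] at hb
        simpa using hb
      · intro hj0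
        have hcotra := hind.2.2.1
        subst hj0
        have hzp : (∑ k : Fin n, if (k:ℕ)+1 ≤ 0 then
            p.2 k * ((1 - Real.log (r ((k:ℕ)+1)) : ℝ):ℂ) else 0) = 0 :=
          Finset.sum_eq_zero (fun k _ => if_neg (by omega))
        have hzq : (∑ k : Fin n, if (k:ℕ)+1 ≤ 0 then
            q.2 k * ((1 - Real.log (r ((k:ℕ)+1)) : ℝ):ℂ) else 0) = 0 :=
          Finset.sum_eq_zero (fun k _ => if_neg (by omega))
        rw [hzp, hzq] at hcotra
        linear_combination hcotra
    have hwN0 : ∀ i, i < n → wN i = 0 := by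
      intro i hi
      have h1 := (hTj i hi).1
      rw [Finset.sum_eq_sum_Ico_succ_bot hi] at h1
      have h2 : (∑ t ∈ Finset.Ico (i+1) n, -(wN t)) = 0 := by
        rcases Nat.lt_or_ge (i+1) n with h | h
        · exact (hTj (i+1) h).1
        · rw [Finset.Ico_eq_empty (by omega)]; simp
      rw [h2, add_zero] at h1
      exact neg_eq_zero.mp h1
    have hw0 : ∀ k : Fin n, p.2 k = q.2 k := by
      intro k
      have h := hwN0 (k:ℕ) k.isLt
      simp only [hwN] at h
      rw [dif_pos k.isLt] at h
      have hinv : ((((r ((k:ℕ)+1))^2)⁻¹ : ℝ):ℂ) ≠ 0 := by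
        push_cast
        exact inv_ne_zero (pow_ne_zero 2 (hρall' k))
      have hwk : w ⟨(k:ℕ), k.isLt⟩ = 0 := by
        rcases mul_eq_zero.mp h with h' | h'
        · exact h'
        · exact absurd h' hinv
      rw [Fin.eta] at hwk
      rw [hwdef] at hwk
      exact sub_eq_zero.mp hwk
    have hp1 : p.1 = q.1 := sub_eq_zero.mp ((hTj 0 (by omega)).2 rfl)
    exact Prod.ext hp1 (funext hw0)
  -- conclusion
  constructor
  · exact ⟨(cc, aF), hrep, fun y hy => huniq y (cc, aF) hy hrep⟩
  · rintro ⟨as, cs, hns⟩ p hp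
    have hlow : ∀ k : Fin n, (k:ℕ)+1 ≤ 0 → ∀ x ∈ Set.Ioo (0:ℝ) (r 1),
        r ((k:ℕ)+1) < x := fun k hk => absurd hk (by omega)
    have hhigh : ∀ k : Fin n, (0:ℕ) < (k:ℕ)+1 → ∀ x ∈ Set.Ioo (0:ℝ) (r 1),
        x ≤ r ((k:ℕ)+1) := by
      intro k hk x hx
      exact le_trans hx.2.le (rmono 1 ((k:ℕ)+1) le_rfl (by omega) (by omega))
    have hEq : ∀ x ∈ Set.Ioo (0:ℝ) (r 1), pfAux
        ((∑ k : Fin n, if (k:ℕ)+1 ≤ 0 then 0 else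
            p.2 k * (((1+Real.log (r ((k:ℕ)+1)))/(r ((k:ℕ)+1))^2 : ℝ):ℂ)) - as)
        (∑ k : Fin n, if (k:ℕ)+1 ≤ 0 then 0 else
            -(p.2 k * ((((r ((k:ℕ)+1))^2)⁻¹ : ℝ):ℂ)))
        ((∑ k : Fin n, if (k:ℕ)+1 ≤ 0 then
            p.2 k * ((1 - Real.log (r ((k:ℕ)+1)) : ℝ):ℂ) else 0) + p.1 - cs)
        (∑ k : Fin n, if (k:ℕ)+1 ≤ 0 then p.2 k else 0) x = 0 := by
      intro x hx
      have hx0 : 0 < x := hx.1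
      have h1 := hp x (le_of_lt hx0)
      rw [sumEval (j := 0) r p.2 hx0 hρall (fun k hk => hlow k hk x hx)
        (fun k hk => hhigh k hk x hx)] at h1
      have h2 := hns x hx
      rw [h2] at h1
      simp only [pfAux] at h1 ⊢
      linear_combination -h1
    have hind := indep_pfAux (le_refl (0:ℝ)) hpos hEq
    have hb := hind.2.1
    have hbsum : (∑ k : Fin n, -(p.2 k * ((((r ((k:ℕ)+1))^2)⁻¹ : ℝ):ℂ))) = 0 := by
      rw [← hb]
      exact Finset.sum_congr rfl (fun k _ => (if_neg (by omega)).symm)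
    rw [Finset.sum_neg_distrib] at hbsum
    have hsum2 : (∑ k : Fin n, p.2 k * ((((r ((k:ℕ)+1))^2)⁻¹ : ℝ):ℂ)) = 0 :=
      neg_eq_zero.mp hbsum
    rw [← hsum2]
    refine Finset.sum_congr rfl (fun k _ => ?_)
    have hz2 : ((r ((k:ℕ)+1) : ℝ):ℂ)^(-2:ℤ) = ((((r ((k:ℕ)+1))^2)⁻¹ : ℝ):ℂ) := by
      rw [zpow_neg]
      push_cast
      norm_num
    rw [hz2]
end
end

section
/- The function η₂(r) := (4/3)·( ln 2 − φ₀(r) + φ₀(r/2) ), r ≥ 0, is a Beppo Levi L₀-spline on the knot set ρ = {1,2}, and η₂(r) = 0 for all r ≥ 2; moreover, its singular coefficient, i.e. the coefficient b of r²·ln r in its representation η₂(r) = a·r² + b·r²·ln r + c on (0,1), equals 1. -/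
open MeasureTheory Set Filter

noncomputable section

/-- smooth branch -/
def g1 (r : ℝ) : ℝ := r ^ 2 - r ^ 2 * Real.log r - 1 - Real.log r
def g1' (r : ℝ) : ℝ := r - 2 * r * Real.log r - 1 / r
def g1'' (r : ℝ) : ℝ := -1 - 2 * Real.log r + 1 / r ^ 2

lemma hasDerivAt_g1 {x : ℝ} (hx : 0 < x) : HasDerivAt g1 (g1' x) x := by
  have hl := Real.hasDerivAt_log hx.ne'
  have h2 : HasDerivAt (fun r : ℝ => r ^ 2) (2 * x) x := by
    simpa using hasDerivAt_pow 2 x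
  have := ((h2.sub (h2.mul hl)).sub_const 1).sub hl
  refine this.congr_deriv ?_
  unfold g1'
  field_simp
  ring

lemma hasDerivAt_g1' {x : ℝ} (hx : 0 < x) : HasDerivAt g1' (g1'' x) x := by
  have hl := Real.hasDerivAt_log hx.ne'
  have hid : HasDerivAt (fun r : ℝ => r) 1 x := hasDerivAt_id x
  have hinv : HasDerivAt (fun r : ℝ => 1 / r) (-(1 / x ^ 2)) x := by
    simpa using (hasDerivAt_inv hx.ne')
  have := (hid.sub ((hid.const_mul 2).mul hl)).sub hinv
  refine this.congr_deriv ?_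
  unfold g1''
  field_simp
  ring

lemma hasDerivAt_junction (f f' : ℝ → ℝ) (hf : ∀ x, 0 < x → HasDerivAt f (f' x) x)
    (hf1 : f 1 = 0) (hf'1 : f' 1 = 0) {x : ℝ} (hx : 0 < x) :
    HasDerivAt (fun r => if r ≤ 1 then f r else 0) (if x ≤ 1 then f' x else 0) x := by
  rcases lt_trichotomy x 1 with h | h | h
  · rw [if_pos h.le]
    apply (hf x hx).congr_of_eventuallyEq
    filter_upwards [Iio_mem_nhds h] with y hy
    rw [if_pos (le_of_lt hy)]
  · subst h
    rw [if_pos le_rfl]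
    rw [← hasDerivWithinAt_univ, ← Iic_union_Ici (a := (1:ℝ))]
    apply HasDerivWithinAt.union
    · exact ((hf 1 hx).hasDerivWithinAt).congr (fun y hy => by rw [if_pos (mem_Iic.mp hy)]) (by simp)
    · have : HasDerivWithinAt (fun _ : ℝ => (0:ℝ)) 0 (Ici 1) 1 :=
        (hasDerivAt_const (1:ℝ) 0).hasDerivWithinAt
      rw [hf'1]
      exact this.congr (fun y hy => by
        rcases eq_or_lt_of_le (mem_Ici.mp hy) with h' | h'
        · rw [if_pos h'.symm.le, ← h', hf1]
        · rw [if_neg (not_le.2 h')]) (by rw [if_pos le_rfl, hf1])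
  · rw [if_neg (not_le.2 h)]
    apply (hasDerivAt_const x (0:ℝ)).congr_of_eventuallyEq
    filter_upwards [Ioi_mem_nhds h] with y hy
    rw [if_neg (not_le.2 hy)]

lemma continuousOn_junction (f : ℝ → ℝ) (hf : ContinuousOn f (Ioi 0)) (hf1 : f 1 = 0) :
    ContinuousOn (fun r => if r ≤ 1 then f r else 0) (Ioi 0) := by
  have hcover : Ioc (0:ℝ) 1 ∪ Ici 1 = Ioi 0 := by
    ext y; simp only [mem_union, mem_Ioc, mem_Ici, mem_Ioi]
    constructor
    · rintro (⟨h1, _⟩ | h1)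
      · exact h1
      · linarith
    · intro h1; rcases le_or_gt y 1 with h2 | h2
      · exact Or.inl ⟨h1, h2⟩
      · exact Or.inr h2.le
  intro x hx
  have hIoc : ContinuousWithinAt (fun r => if r ≤ 1 then f r else 0) (Ioc 0 1) x ∨ x ∉ Ioc (0:ℝ) 1 := by
    by_cases hmem : x ∈ Ioc (0:ℝ) 1
    · left
      refine ((hf x hx).mono Ioc_subset_Ioi_self).congr
        (fun y hy => by rw [if_pos hy.2]) (by rw [if_pos hmem.2])
    · exact Or.inr hmem
  rw [← hcover]
  apply ContinuousWithinAt.union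
  · by_cases hmem : x ∈ Ioc (0:ℝ) 1
    · refine ((hf x hx).mono Ioc_subset_Ioi_self).congr
        (fun y hy => by rw [if_pos hy.2]) (by rw [if_pos hmem.2])
    ·
      -- continuousWithinAt at a point outside the closure is automatic only if x ∉ closure.
      have hx1 : 1 < x := by
        rcases hmem with hmem
        by_contra h'
        exact hmem ⟨hx, not_lt.mp h'⟩
      apply ContinuousWithinAt.mono (t := Ioc 0 1) _ (le_refl _)
      have : Ioi 1 ∩ Ioc (0:ℝ) 1 = ∅ := by
        ext y; simp only [mem_inter_iff, mem_Ioc, mem_Ioi, mem_empty_iff_false, iff_false]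
        rintro ⟨h3, _, h2⟩; linarith
      have hnhd : Ioi (1:ℝ) ∈ nhds x := Ioi_mem_nhds hx1
      rw [ContinuousWithinAt, ← nhdsWithin_inter_of_mem (mem_nhdsWithin_of_mem_nhds hnhd)]
      rw [this, nhdsWithin_empty]
      exact tendsto_bot
  · by_cases hx1 : 1 ≤ x
    · have : ContinuousWithinAt (fun _ : ℝ => (0:ℝ)) (Ici 1) x := continuousWithinAt_const
      refine this.congr (fun y hy => ?_) ?_
      · rcases eq_or_lt_of_le (mem_Ici.mp hy) with h' | h'
        · rw [if_pos h'.symm.le, ← h', hf1]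
        · rw [if_neg (not_le.2 h')]
      · rcases eq_or_lt_of_le hx1 with h' | h'
        · rw [if_pos h'.symm.le, ← h', hf1]
        · rw [if_neg (not_le.2 h')]
    · push_neg at hx1
      have : Iio (1:ℝ) ∩ Ici 1 = ∅ := by
        ext y; simp only [mem_inter_iff, mem_Ici, mem_Iio, mem_empty_iff_false, iff_false]
        rintro ⟨h3, h2⟩; linarith
      rw [ContinuousWithinAt, ← nhdsWithin_inter_of_mem
        (mem_nhdsWithin_of_mem_nhds (Iio_mem_nhds hx1))]
      rw [this, nhdsWithin_empty]
      exact tendsto_bot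

def psiF (r : ℝ) : ℝ := if r ≤ 1 then g1 r else 0
def psiD (r : ℝ) : ℝ := if r ≤ 1 then g1' r else 0
def psiD2 (r : ℝ) : ℝ := if r ≤ 1 then g1'' r else 0

lemma g1_one : g1 1 = 0 := by simp [g1]
lemma g1'_one : g1' 1 = 0 := by simp [g1']
lemma g1''_one : g1'' 1 = 0 := by simp [g1'']

lemma hasDerivAt_psiF {x : ℝ} (hx : 0 < x) : HasDerivAt psiF (psiD x) x :=
  hasDerivAt_junction g1 g1' (fun _ h => hasDerivAt_g1 h) g1_one g1'_one hx

lemma hasDerivAt_psiD {x : ℝ} (hx : 0 < x) : HasDerivAt psiD (psiD2 x) x :=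
  hasDerivAt_junction g1' g1'' (fun _ h => hasDerivAt_g1' h) g1'_one g1''_one hx

lemma continuousOn_psiD2 : ContinuousOn psiD2 (Ioi 0) := by
  apply continuousOn_junction g1'' _ g1''_one
  intro x hx
  have h1 : ContinuousAt Real.log x := Real.continuousAt_log (ne_of_gt hx)
  have h2 : ContinuousAt (fun r : ℝ => r ^ 2) x := (continuousAt_id.pow 2)
  exact ((continuousAt_const.sub (continuousAt_const.mul h1)).add
    (continuousAt_const.div h2 (pow_ne_zero 2 (ne_of_gt hx)))).continuousWithinAt

lemma contDiffOn_psiF : ContDiffOn ℝ 2 psiF (Ioi 0) := by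
  have hu : UniqueDiffOn ℝ (Ioi (0:ℝ)) := isOpen_Ioi.uniqueDiffOn
  have hd1 : ∀ x ∈ Ioi (0:ℝ), derivWithin psiF (Ioi 0) x = psiD x := fun x hx =>
    (hasDerivAt_psiF hx).hasDerivWithinAt.derivWithin (hu x hx)
  have hd2 : ∀ x ∈ Ioi (0:ℝ), derivWithin psiD (Ioi 0) x = psiD2 x := fun x hx =>
    (hasDerivAt_psiD hx).hasDerivWithinAt.derivWithin (hu x hx)
  have hD : ContDiffOn ℝ 1 psiD (Ioi 0) := by
    have h1 : (1 : WithTop ℕ∞) = 0 + 1 := by norm_num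
    rw [h1, contDiffOn_succ_iff_derivWithin hu]
    refine ⟨fun x hx => (hasDerivAt_psiD hx).differentiableAt.differentiableWithinAt,
      by simp, ?_⟩
    rw [contDiffOn_zero]
    exact continuousOn_psiD2.congr hd2
  have h2 : (2 : WithTop ℕ∞) = 1 + 1 := by norm_num
  rw [h2, contDiffOn_succ_iff_derivWithin hu]
  exact ⟨fun x hx => (hasDerivAt_psiF hx).differentiableAt.differentiableWithinAt,
    by simp, hD.congr hd1⟩

lemma phi0_of_le {r : ℝ} (h : r ≤ 1) : phi0 r = r ^ 2 - r ^ 2 * Real.log r := if_pos h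
lemma phi0_of_gt {r : ℝ} (h : 1 < r) : phi0 r = 1 + Real.log r := if_neg (not_le.2 h)

lemma psiF_eq {r : ℝ} (hr : 0 < r) : psiF r = phi0 r - (1 + Real.log r) := by
  unfold psiF phi0 g1
  by_cases h : r ≤ 1 <;> simp [h] <;> ring

lemma eta2_eq_psi {x : ℝ} (hx : 0 < x) :
    eta2 x = (((4 / 3 : ℝ) * (psiF (x / 2) - psiF x) : ℝ) : ℂ) := by
  unfold eta2
  congr 1
  rw [psiF_eq (by linarith : (0:ℝ) < x / 2), psiF_eq hx,
    Real.log_div hx.ne' two_ne_zero]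
  ring

lemma eta2_zero {x : ℝ} (hx : 2 ≤ x) : eta2 x = 0 := by
  unfold eta2
  rcases eq_or_lt_of_le hx with h | h
  · rw [← h, show (2:ℝ)/2 = 1 by norm_num, phi0_of_gt one_lt_two, phi0_of_le le_rfl]
    simp only [Complex.ofReal_eq_zero, Real.log_one]
    ring
  · rw [phi0_of_gt (by linarith), phi0_of_gt (by linarith),
      Real.log_div (by linarith : (0:ℝ) < x).ne' two_ne_zero]
    simp only [Complex.ofReal_eq_zero]
    ring

lemma eta2_left {x : ℝ} (hx : x ∈ Ioo (0:ℝ) 1) :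
    eta2 x = (((Real.log 2 - 3)/3 : ℝ) : ℂ) * (x:ℂ) ^ 2
      + 1 * (x:ℂ) ^ 2 * (Real.log x : ℂ) + (((4/3) * Real.log 2 : ℝ) : ℂ) := by
  unfold eta2
  rw [phi0_of_le hx.2.le, phi0_of_le (by linarith [hx.2] : x / 2 ≤ 1),
    Real.log_div hx.1.ne' two_ne_zero]
  push_cast
  ring

lemma eta2_mid {x : ℝ} (hx : x ∈ Ioo (1:ℝ) 2) :
    eta2 x = (((1 + Real.log 2)/3 : ℝ) : ℂ) * (x:ℂ) ^ 2
      + ((-1/3 : ℝ) : ℂ) * (x:ℂ) ^ 2 * (Real.log x : ℂ)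
      + (((4/3) * (Real.log 2 - 1) : ℝ) : ℂ) + ((-4/3 : ℝ) : ℂ) * (Real.log x : ℂ) := by
  have hx0 : (0:ℝ) < x := lt_trans one_pos hx.1
  unfold eta2
  rw [phi0_of_gt hx.1, phi0_of_le (by linarith [hx.2] : x / 2 ≤ 1),
    Real.log_div hx0.ne' two_ne_zero]
  push_cast
  ring

lemma eta2_contDiffOn : ContDiffOn ℝ 2 eta2 (Ioi 0) := by
  have hhalf : ContDiffOn ℝ 2 (fun x : ℝ => psiF (x / 2)) (Ioi 0) := by
    apply contDiffOn_psiF.comp ((contDiff_id.div_const 2).contDiffOn)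
    intro x hx
    simp only [mem_Ioi, id_eq] at *
    linarith
  have hG : ContDiffOn ℝ 2 (fun x : ℝ => (4/3 : ℝ) * (psiF (x / 2) - psiF x)) (Ioi 0) :=
    (hhalf.sub contDiffOn_psiF).const_smul (4/3 : ℝ)
  have := Complex.ofRealCLM.contDiff.comp_contDiffOn hG
  exact this.congr (fun x hx => eta2_eq_psi hx)

lemma eta2_cont0 : ContinuousWithinAt eta2 (Ici 0) 0 := by
  have hsq : Tendsto (fun x : ℝ => x ^ 2) (nhdsWithin 0 (Ici 0)) (nhds 0) := by
    have := (continuous_pow 2).tendsto (0:ℝ)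
    simpa using this.mono_left nhdsWithin_le_nhds
  have hIci : Ici (0:ℝ) = {0} ∪ Ioi 0 := by
    ext y; simp only [mem_Ici, mem_union, mem_singleton_iff, mem_Ioi]
    constructor
    · intro h; rcases eq_or_lt_of_le h with h' | h'
      · exact Or.inl h'.symm
      · exact Or.inr h'
    · rintro (rfl | h); exacts [le_refl 0, h.le]
  have hlog : Tendsto (fun x : ℝ => x ^ 2 * Real.log x) (nhdsWithin 0 (Ici 0)) (nhds 0) := by
    rw [hIci, nhdsWithin_union, tendsto_sup]
    constructor
    · rw [nhdsWithin_singleton]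
      have := tendsto_pure_nhds (fun x : ℝ => x ^ 2 * Real.log x) 0
      norm_num [Real.log_zero] at this
      exact this
    · have h := tendsto_log_mul_rpow_nhdsGT_zero (by norm_num : (0:ℝ) < 2)
      refine h.congr' ?_
      filter_upwards [self_mem_nhdsWithin] with y hy
      rw [show (2:ℝ) = ((2:ℕ):ℝ) by norm_num, Real.rpow_natCast]
      ring
  have hphi : ContinuousWithinAt phi0 (Ici 0) 0 := by
    have hval : phi0 0 = 0 := by norm_num [phi0]
    rw [ContinuousWithinAt, hval]
    have hf : Tendsto (fun x : ℝ => x ^ 2 - x ^ 2 * Real.log x)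
        (nhdsWithin 0 (Ici 0)) (nhds 0) := by simpa using hsq.sub hlog
    refine hf.congr' ?_
    filter_upwards [nhdsWithin_le_nhds (Iic_mem_nhds (by norm_num : (0:ℝ) < 1))] with y hy
    rw [phi0_of_le hy]
  have hphi2 : ContinuousWithinAt (fun x : ℝ => phi0 (x / 2)) (Ici 0) 0 := by
    have hdiv : ContinuousWithinAt (fun x : ℝ => x / 2) (Ici 0) 0 :=
      (continuous_id.div_const 2).continuousWithinAt
    have hmaps : MapsTo (fun x : ℝ => x / 2) (Ici 0) (Ici 0) := fun y hy => by
      simp only [mem_Ici] at *; linarith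
    have h02 : ContinuousWithinAt phi0 (Ici 0) ((0:ℝ) / 2) := by
      rw [zero_div]; exact hphi
    exact ContinuousWithinAt.comp (f := fun x : ℝ => x / 2) (g := phi0) h02 hdiv hmaps
  have hG : ContinuousWithinAt
      (fun x : ℝ => (4/3 : ℝ) * (Real.log 2 - phi0 x + phi0 (x / 2))) (Ici 0) 0 :=
    continuousWithinAt_const.mul ((continuousWithinAt_const.sub hphi).add hphi2)
  exact Complex.continuous_ofReal.continuousAt.comp_continuousWithinAt hG


/-- Johnson's profile `η₂(r) = (4/3)(ln 2 − φ₀(r) + φ₀(r/2))` is a Beppo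
Levi `L₀`-spline on the knots `{1,2}`, vanishes for `r ≥ 2`, and its singular
coefficient (the coefficient of `r²·ln r` on `(0,1)`) equals `1`. -/
theorem stmt17 :
    IsBLSpline 2 (fun j => (j : ℝ)) eta2 ∧
    (∀ x : ℝ, 2 ≤ x → eta2 x = 0) ∧
    (∃ a c : ℂ, ∀ x ∈ Set.Ioo (0:ℝ) 1,
      eta2 x = a * (x : ℂ) ^ 2 + 1 * (x : ℂ) ^ 2 * (Real.log x : ℂ) + c) := by
  refine ⟨⟨?_, ?_, ?_, eta2_contDiffOn, eta2_cont0⟩, fun x hx => eta2_zero hx,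
    ⟨_, _, fun x hx => eta2_left hx⟩⟩
  · intro j hj hjn
    have hj1 : j = 1 := by omega
    subst hj1
    refine ⟨(((1 + Real.log 2)/3 : ℝ) : ℂ), ((-1/3 : ℝ) : ℂ),
      (((4/3) * (Real.log 2 - 1) : ℝ) : ℂ), ((-4/3 : ℝ) : ℂ), fun x hx => ?_⟩
    have hx' : x ∈ Ioo (1:ℝ) 2 := by
      simpa using hx
    exact eta2_mid hx'
  · refine ⟨(((Real.log 2 - 3)/3 : ℝ) : ℂ), 1, (((4/3) * Real.log 2 : ℝ) : ℂ), fun x hx => ?_⟩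
    have hx' : x ∈ Ioo (0:ℝ) 1 := by simpa using hx
    exact eta2_left hx'
  · refine ⟨0, 0, fun x hx => ?_⟩
    have hx' : (2:ℝ) ≤ x := by
      simp only [mem_Ioi] at hx
      exact_mod_cast hx.le
    rw [eta2_zero hx']
    ring
end
end

section
/- The function β(r) := (1/5)·( 27·ln 3 − 32·ln 2 + 5·φ₀(r) − 32·φ₀(r/2) + 27·φ₀(r/3) ), r ≥ 0, is a non-singular Beppo Levi L₀-spline on the knot set ρ = {1,2,3} satisfying β(r) = 0 for all r ≥ 3; moreover, every non-singular Beppo Levi L₀-spline on ρ = {1,2,3} that vanishes identically on [3,∞) is a constant multiple of β. -/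
open MeasureTheory Set Filter

noncomputable section

section
open Topology
namespace S18


def Pc (a b c d : ℂ) (x : ℝ) : ℂ :=
  a * (x : ℂ) ^ 2 + b * (x : ℂ) ^ 2 * (Real.log x : ℂ) + c + d * (Real.log x : ℂ)
def Pc1 (a b d : ℂ) (x : ℝ) : ℂ :=
  2*a*(x:ℂ) + b*(2*(x:ℂ)*(Real.log x:ℂ) + (x:ℂ)) + d*(x:ℂ)⁻¹
def Pc2 (a b d : ℂ) (x : ℝ) : ℂ :=
  2*a + b*(2*(Real.log x:ℂ) + 3) - d*((x:ℂ)^2)⁻¹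

lemma hasDerivAt_Pc (a b c d : ℂ) {x : ℝ} (hx : 0 < x) :
    HasDerivAt (Pc a b c d) (Pc1 a b d x) x := by
  have hf2 : HasDerivAt (fun y : ℝ => y^2) (2*x) x := by
    simpa using hasDerivAt_pow 2 x
  have hlog := Real.hasDerivAt_log hx.ne'
  have hf2L : HasDerivAt (fun y : ℝ => y^2 * Real.log y) (2*x*Real.log x + x) x := by
    have h := hf2.mul hlog
    have : 2 * x * Real.log x + x^2 * x⁻¹ = 2*x*Real.log x + x := by
      field_simp
    rwa [this] at h
  have H := ((((hf2.ofReal_comp.const_mul a).add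
      (hf2L.ofReal_comp.const_mul b)).add_const c).add
      (hlog.ofReal_comp.const_mul d))
  have heq : (fun y : ℝ => a * ((y^2 : ℝ):ℂ) + b * ((y^2 * Real.log y : ℝ):ℂ) + c
        + d * ((Real.log y : ℝ):ℂ)) = Pc a b c d := by
    funext y; simp only [Pc]; push_cast; ring
  replace H : HasDerivAt (fun y : ℝ => a * ((y^2 : ℝ):ℂ) + b * ((y^2 * Real.log y : ℝ):ℂ) + c
        + d * ((Real.log y : ℝ):ℂ)) _ x := H
  rw [heq] at H
  convert H using 1
  simp only [Pc1]
  have hx0 : (x:ℂ) ≠ 0 := by exact_mod_cast hx.ne'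
  push_cast
  ring

lemma hasDerivAt_Pc1 (a b d : ℂ) {x : ℝ} (hx : 0 < x) :
    HasDerivAt (Pc1 a b d) (Pc2 a b d x) x := by
  have hid : HasDerivAt (fun y : ℝ => y) 1 x := hasDerivAt_id x
  have hlog := Real.hasDerivAt_log hx.ne'
  have hmid : HasDerivAt (fun y : ℝ => 2*(y*Real.log y) + y) (2*Real.log x + 3) x := by
    have h1 : HasDerivAt (fun y : ℝ => y * Real.log y) (1 * Real.log x + x * x⁻¹) x :=
      hid.mul hlog
    have h := (h1.const_mul 2).add hid
    have : 2 * (1 * Real.log x + x * x⁻¹) + 1 = 2*Real.log x + 3 := by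
      field_simp; ring
    rwa [this] at h
  have hinv : HasDerivAt (fun y : ℝ => y⁻¹) (-1/x^2) x := by
    have := hid.inv hx.ne'
    exact this
  have H := (((hid.ofReal_comp.const_mul (2*a)).add
      (hmid.ofReal_comp.const_mul b)).add (hinv.ofReal_comp.const_mul d))
  have heq : (fun y : ℝ => 2*a * ((y : ℝ):ℂ) + b * ((2*(y*Real.log y) + y : ℝ):ℂ)
        + d * ((y⁻¹ : ℝ):ℂ)) = Pc1 a b d := by
    funext y; simp only [Pc1]; push_cast; ring
  replace H : HasDerivAt (fun y : ℝ => 2*a * ((y : ℝ):ℂ) + b * ((2*(y*Real.log y) + y : ℝ):ℂ)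
        + d * ((y⁻¹ : ℝ):ℂ)) _ x := H
  rw [heq] at H
  convert H using 1
  simp only [Pc2]
  have hx0 : (x:ℂ) ≠ 0 := by exact_mod_cast hx.ne'
  push_cast
  field_simp
  ring

lemma continuousAt_Pc2 (a b d : ℂ) {x : ℝ} (hx : 0 < x) : ContinuousAt (Pc2 a b d) x := by
  have hx0 : (x:ℂ) ≠ 0 := by exact_mod_cast hx.ne'
  have hlog : ContinuousAt (fun y : ℝ => ((Real.log y : ℝ):ℂ)) x :=
    Complex.continuous_ofReal.continuousAt.comp (Real.continuousAt_log hx.ne')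
  have hsq : ContinuousAt (fun y : ℝ => ((y:ℂ)^2)⁻¹) x := by
    exact ((Complex.continuous_ofReal.continuousAt.pow 2).inv₀ (by simpa using pow_ne_zero 2 hx0))
  exact (continuousAt_const.add (continuousAt_const.mul
    ((hlog.const_mul 2).add continuousAt_const))).sub (hsq.const_mul d)



lemma eq_left {f g : ℝ → ℂ} {u k : ℝ} (h : u < k) (hf : ContinuousAt f k)
    (hg : ContinuousAt g k) (he : ∀ x ∈ Ioo u k, f x = g x) : f k = g k := by
  have hmem : Ioo u k ∈ 𝓝[<] k := Ioo_mem_nhdsLT_of_mem ⟨h, le_refl k⟩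
  have h1 : Tendsto f (𝓝[<] k) (𝓝 (f k)) := hf.continuousWithinAt.tendsto
  have h2 : Tendsto g (𝓝[<] k) (𝓝 (g k)) := hg.continuousWithinAt.tendsto
  have he' : f =ᶠ[𝓝[<] k] g := eventually_of_mem hmem he
  exact tendsto_nhds_unique (h1.congr' he') h2

lemma eq_right {f g : ℝ → ℂ} {k v : ℝ} (h : k < v) (hf : ContinuousAt f k)
    (hg : ContinuousAt g k) (he : ∀ x ∈ Ioo k v, f x = g x) : f k = g k := by
  have hmem : Ioo k v ∈ 𝓝[>] k := Ioo_mem_nhdsGT_of_mem ⟨le_refl k, h⟩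
  have h1 : Tendsto f (𝓝[>] k) (𝓝 (f k)) := hf.continuousWithinAt.tendsto
  have h2 : Tendsto g (𝓝[>] k) (𝓝 (g k)) := hg.continuousWithinAt.tendsto
  have he' : f =ᶠ[𝓝[>] k] g := eventually_of_mem hmem he
  exact tendsto_nhds_unique (h1.congr' he') h2

lemma deriv_eqOn {f p p' : ℝ → ℂ} {s : Set ℝ} (hs : IsOpen s)
    (he : ∀ x ∈ s, f x = p x) (hp : ∀ x ∈ s, HasDerivAt p (p' x) x) :
    ∀ x ∈ s, deriv f x = p' x := fun x hx => by
  have hev : f =ᶠ[𝓝 x] p := eventually_of_mem (hs.mem_nhds hx) he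
  rw [hev.deriv_eq]; exact (hp x hx).deriv

-- phi0 smoothness
def phi0A (r : ℝ) : ℝ := if r ≤ 1 then r - 2*(r*Real.log r) else r⁻¹
def phi0B (r : ℝ) : ℝ := if r ≤ 1 then -1 - 2*Real.log r else -((r^2)⁻¹)

lemma phi0_ge {y : ℝ} (hy : 1 ≤ y) : phi0 y = 1 + Real.log y := by
  rcases eq_or_lt_of_le hy with h|h
  · simp [phi0, ← h]
  · simp [phi0, not_le.2 h]

lemma hasDerivAt_low {r : ℝ} (hr : 0 < r) :
    HasDerivAt (fun y : ℝ => y ^ 2 - y ^ 2 * Real.log y) (r - 2*(r*Real.log r)) r := by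
  have hf2 : HasDerivAt (fun y : ℝ => y^2) (2*r) r := by simpa using hasDerivAt_pow 2 r
  have hlog := Real.hasDerivAt_log hr.ne'
  have h := hf2.sub (hf2.mul hlog)
  have : 2*r - (2 * r * Real.log r + r^2 * r⁻¹) = r - 2*(r*Real.log r) := by
    field_simp; ring
  rwa [this] at h

lemma hasDerivAt_high {r : ℝ} (hr : 0 < r) :
    HasDerivAt (fun y : ℝ => 1 + Real.log y) r⁻¹ r :=
  (Real.hasDerivAt_log hr.ne').const_add 1

lemma hasDerivAt_phi0 {r : ℝ} (hr : 0 < r) : HasDerivAt phi0 (phi0A r) r := by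
  rcases lt_trichotomy r 1 with h|h|h
  · have hev : phi0 =ᶠ[𝓝 r] fun y => y ^ 2 - y ^ 2 * Real.log y := by
      filter_upwards [Iio_mem_nhds h] with y hy
      simp [phi0, le_of_lt (mem_Iio.1 hy)]
    have := (hasDerivAt_low hr).congr_of_eventuallyEq hev
    simpa [phi0A, h.le] using this
  · subst h
    have hW1 : HasDerivWithinAt phi0 1 (Iic 1) 1 := by
      have := (hasDerivAt_low one_pos).hasDerivWithinAt (s := Iic 1)
      simp only [Real.log_one, mul_zero, mul_one, sub_zero] at this
      exact this.congr (fun y hy => by simp [phi0, mem_Iic.1 hy]) (by simp [phi0])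
    have hW2 : HasDerivWithinAt phi0 1 (Ici 1) 1 := by
      have := (hasDerivAt_high one_pos).hasDerivWithinAt (s := Ici 1)
      simp only [inv_one] at this
      exact this.congr (fun y hy => phi0_ge (mem_Ici.1 hy)) (by simp [phi0])
    have := hW1.union hW2
    rw [Iic_union_Ici, hasDerivWithinAt_univ] at this
    simpa [phi0A] using this
  · have hev : phi0 =ᶠ[𝓝 r] fun y => 1 + Real.log y := by
      filter_upwards [Ioi_mem_nhds h] with y hy
      simp [phi0, not_le.2 (mem_Ioi.1 hy)]
    have := (hasDerivAt_high hr).congr_of_eventuallyEq hev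
    simpa [phi0A, not_le.2 h] using this

lemma hasDerivAt_lowA {r : ℝ} (hr : 0 < r) :
    HasDerivAt (fun y : ℝ => y - 2*(y*Real.log y)) (-1 - 2*Real.log r) r := by
  have hid : HasDerivAt (fun y : ℝ => y) 1 r := hasDerivAt_id r
  have hlog := Real.hasDerivAt_log hr.ne'
  have h := hid.sub ((hid.mul hlog).const_mul 2)
  have : 1 - 2 * (1 * Real.log r + r * r⁻¹) = -1 - 2*Real.log r := by
    field_simp; ring
  rwa [this] at h

lemma hasDerivAt_highA {r : ℝ} (hr : 0 < r) :
    HasDerivAt (fun y : ℝ => y⁻¹) (-((r^2)⁻¹)) r := by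
  have := (hasDerivAt_id r).inv hr.ne'
  have h' : -1/r^2 = -((r^2)⁻¹) := by ring
  rw [← h']; exact this

lemma hasDerivAt_phi0A {r : ℝ} (hr : 0 < r) : HasDerivAt phi0A (phi0B r) r := by
  rcases lt_trichotomy r 1 with h|h|h
  · have hev : phi0A =ᶠ[𝓝 r] fun y => y - 2*(y*Real.log y) := by
      filter_upwards [Iio_mem_nhds h] with y hy
      simp [phi0A, le_of_lt (mem_Iio.1 hy)]
    have := (hasDerivAt_lowA hr).congr_of_eventuallyEq hev
    simpa [phi0B, h.le] using this
  · subst h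
    have hW1 : HasDerivWithinAt phi0A (-1) (Iic 1) 1 := by
      have := (hasDerivAt_lowA one_pos).hasDerivWithinAt (s := Iic 1)
      simp only [Real.log_one, mul_zero, sub_zero] at this
      exact this.congr (fun y hy => by simp [phi0A, mem_Iic.1 hy]) (by simp [phi0A])
    have hW2 : HasDerivWithinAt phi0A (-1) (Ici 1) 1 := by
      have := (hasDerivAt_highA one_pos).hasDerivWithinAt (s := Ici 1)
      simp only [one_pow, inv_one] at this
      refine this.congr (fun y hy => ?_) (by simp [phi0A])
      rcases eq_or_lt_of_le (mem_Ici.1 hy) with h'|h'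
      · simp [phi0A, ← h']
      · simp [phi0A, not_le.2 h']
    have := hW1.union hW2
    rw [Iic_union_Ici, hasDerivWithinAt_univ] at this
    simpa [phi0B] using this
  · have hev : phi0A =ᶠ[𝓝 r] fun y => y⁻¹ := by
      filter_upwards [Ioi_mem_nhds h] with y hy
      simp [phi0A, not_le.2 (mem_Ioi.1 hy)]
    have := (hasDerivAt_highA hr).congr_of_eventuallyEq hev
    simpa [phi0B, not_le.2 h] using this

lemma continuousOn_phi0B : ContinuousOn phi0B (Ioi 0) := by
  intro r hr
  have hr' : (0:ℝ) < r := hr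
  rcases lt_trichotomy r 1 with h|h|h
  · have hg : ContinuousAt (fun y : ℝ => -1 - 2*Real.log y) r :=
      continuousAt_const.sub ((Real.continuousAt_log hr'.ne').const_mul 2)
    have hev : phi0B =ᶠ[𝓝 r] fun y => -1 - 2*Real.log y := by
      filter_upwards [Iio_mem_nhds h] with y hy
      simp [phi0B, le_of_lt (mem_Iio.1 hy)]
    exact (hg.congr hev.symm).continuousWithinAt
  · subst h
    have c1 : ContinuousWithinAt phi0B (Iic 1) 1 := by
      have hg : ContinuousAt (fun y : ℝ => -1 - 2*Real.log y) 1 :=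
        continuousAt_const.sub ((Real.continuousAt_log one_ne_zero).const_mul 2)
      exact hg.continuousWithinAt.congr (fun y hy => by simp [phi0B, mem_Iic.1 hy])
        (by simp [phi0B])
    have c2 : ContinuousWithinAt phi0B (Ici 1) 1 := by
      have hg : ContinuousAt (fun y : ℝ => -((y^2)⁻¹)) 1 :=
        ((continuousAt_id.pow 2).inv₀ (by norm_num)).neg
      refine hg.continuousWithinAt.congr (fun y hy => ?_) (by simp [phi0B])
      rcases eq_or_lt_of_le (mem_Ici.1 hy) with h'|h'
      · simp [phi0B, ← h']
      · simp [phi0B, not_le.2 h']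
    have := c1.union c2
    rw [Iic_union_Ici] at this
    exact ((continuousWithinAt_univ phi0B 1).1 this).continuousWithinAt
  · have hg : ContinuousAt (fun y : ℝ => -((y^2)⁻¹)) r :=
      ((continuousAt_id.pow 2).inv₀ (pow_ne_zero 2 hr'.ne')).neg
    have hev : phi0B =ᶠ[𝓝 r] fun y => -((y^2)⁻¹) := by
      filter_upwards [Ioi_mem_nhds h] with y hy
      simp [phi0B, not_le.2 (mem_Ioi.1 hy)]
    exact (hg.congr hev.symm).continuousWithinAt

lemma contDiffOn_phi0 : ContDiffOn ℝ 2 phi0 (Ioi 0) := by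
  rw [show (2 : WithTop ℕ∞) = 1 + 1 by norm_num, contDiffOn_succ_iff_deriv_of_isOpen isOpen_Ioi]
  refine ⟨fun r hr => (hasDerivAt_phi0 hr).differentiableAt.differentiableWithinAt,
    by simp, ?_⟩
  have h1 : ContDiffOn ℝ 1 phi0A (Ioi 0) := by
    rw [show (1 : WithTop ℕ∞) = 0 + 1 by norm_num, contDiffOn_succ_iff_deriv_of_isOpen isOpen_Ioi]
    refine ⟨fun r hr => (hasDerivAt_phi0A hr).differentiableAt.differentiableWithinAt,
      by simp, ?_⟩
    rw [contDiffOn_zero]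
    exact continuousOn_phi0B.congr (fun r hr => (hasDerivAt_phi0A hr).deriv)
  exact h1.congr (fun r hr => (hasDerivAt_phi0 hr).deriv)

lemma contDiffOn_betaFn : ContDiffOn ℝ 2 betaFn (Ioi 0) := by
  have hdiv : ∀ c : ℝ, 0 < c → ContDiffOn ℝ 2 (fun x : ℝ => phi0 (x / c)) (Ioi 0) := by
    intro c hc
    exact contDiffOn_phi0.comp (contDiff_id.div_const c).contDiffOn
      (fun x hx => by exact div_pos hx hc)
  have hg : ContDiffOn ℝ 2 (fun x : ℝ => (1 / 5 : ℝ) * (27 * Real.log 3 - 32 * Real.log 2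
      + 5 * phi0 x - 32 * phi0 (x / 2) + 27 * phi0 (x / 3))) (Ioi 0) := by
    refine contDiffOn_const.mul ?_
    exact ((((contDiffOn_const.sub contDiffOn_const).add
      (contDiffOn_const.mul contDiffOn_phi0)).sub
      (contDiffOn_const.mul (hdiv 2 two_pos))).add
      (contDiffOn_const.mul (hdiv 3 three_pos)))
  exact (Complex.ofRealCLM.contDiff.comp_contDiffOn hg).congr
    (fun x hx => by simp [betaFn, Complex.ofRealCLM_apply])

def L2 : ℂ := ((Real.log 2 : ℝ) : ℂ)
def L3 : ℂ := ((Real.log 3 : ℝ) : ℂ)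

def bA0 : ℂ := (3*L3 - 8*L2)/5
def bC0 : ℂ := (27*L3 - 32*L2)/5
def bA1 : ℂ := (3*L3 - 8*L2 - 5)/5
def bC1 : ℂ := (27*L3 - 32*L2 + 5)/5
def bA2 : ℂ := (3*L3 + 3)/5
def bB2 : ℂ := (-3)/5
def bC2 : ℂ := (27*L3 - 27)/5
def bD2 : ℂ := (-27)/5

lemma phi0_le {y : ℝ} (hy : y ≤ 1) : phi0 y = y^2 - y^2*Real.log y := if_pos hy

lemma phi0_ge' {y : ℝ} (hy : 1 ≤ y) : phi0 y = 1 + Real.log y := by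
  rcases eq_or_lt_of_le hy with h|h
  · simp [phi0, ← h]
  · simp [phi0, not_le.2 h]

lemma beta_on_01 {x : ℝ} (hx0 : 0 < x) (hx1 : x < 1) :
    betaFn x = Pc bA0 0 bC0 0 x := by
  have l2 : Real.log (x/2) = Real.log x - Real.log 2 :=
    Real.log_div hx0.ne' (by norm_num)
  have l3 : Real.log (x/3) = Real.log x - Real.log 3 :=
    Real.log_div hx0.ne' (by norm_num)
  have p1 := phi0_le hx1.le
  have p2 : phi0 (x/2) = (x/2)^2 - (x/2)^2*Real.log (x/2) := phi0_le (by linarith)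
  have p3 : phi0 (x/3) = (x/3)^2 - (x/3)^2*Real.log (x/3) := phi0_le (by linarith)
  simp only [betaFn, p1, p2, p3, l2, l3, Pc, bA0, bC0, L2, L3]
  push_cast
  ring

lemma beta_on_12 {x : ℝ} (hx0 : 1 < x) (hx1 : x < 2) :
    betaFn x = Pc bA1 1 bC1 1 x := by
  have hx : (0:ℝ) < x := by linarith
  have l2 : Real.log (x/2) = Real.log x - Real.log 2 :=
    Real.log_div hx.ne' (by norm_num)
  have l3 : Real.log (x/3) = Real.log x - Real.log 3 :=
    Real.log_div hx.ne' (by norm_num)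
  have p1 := phi0_ge' hx0.le
  have p2 : phi0 (x/2) = (x/2)^2 - (x/2)^2*Real.log (x/2) := phi0_le (by linarith)
  have p3 : phi0 (x/3) = (x/3)^2 - (x/3)^2*Real.log (x/3) := phi0_le (by linarith)
  simp only [betaFn, p1, p2, p3, l2, l3, Pc, bA1, bC1, L2, L3]
  push_cast
  ring

lemma beta_on_23 {x : ℝ} (hx0 : 2 < x) (hx1 : x < 3) :
    betaFn x = Pc bA2 bB2 bC2 bD2 x := by
  have hx : (0:ℝ) < x := by linarith
  have l2 : Real.log (x/2) = Real.log x - Real.log 2 :=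
    Real.log_div hx.ne' (by norm_num)
  have l3 : Real.log (x/3) = Real.log x - Real.log 3 :=
    Real.log_div hx.ne' (by norm_num)
  have p1 := phi0_ge' (by linarith : (1:ℝ) ≤ x)
  have p2 : phi0 (x/2) = 1 + Real.log (x/2) := phi0_ge' (by linarith)
  have p3 : phi0 (x/3) = (x/3)^2 - (x/3)^2*Real.log (x/3) := phi0_le (by linarith)
  simp only [betaFn, p1, p2, p3, l2, l3, Pc, bA2, bB2, bC2, bD2, L2, L3]
  push_cast
  ring

lemma beta_on_3 {x : ℝ} (hx0 : 3 ≤ x) : betaFn x = 0 := by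
  have hx : (0:ℝ) < x := by linarith
  have l2 : Real.log (x/2) = Real.log x - Real.log 2 :=
    Real.log_div hx.ne' (by norm_num)
  have l3 : Real.log (x/3) = Real.log x - Real.log 3 :=
    Real.log_div hx.ne' (by norm_num)
  have p1 := phi0_ge' (by linarith : (1:ℝ) ≤ x)
  have p2 : phi0 (x/2) = 1 + Real.log (x/2) := phi0_ge' (by linarith)
  have p3 : phi0 (x/3) = 1 + Real.log (x/3) := phi0_ge' (by linarith)
  have : (1 / 5 : ℝ) * (27 * Real.log 3 - 32 * Real.log 2 + 5 * phi0 x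
      - 32 * phi0 (x / 2) + 27 * phi0 (x / 3)) = 0 := by
    rw [p1, p2, p3, l2, l3]; ring
  simp only [betaFn, this, Complex.ofReal_zero]

lemma beta_at_0 : betaFn 0 = bC0 := by
  have p0 : phi0 0 = 0 := by simp [phi0]
  have : betaFn 0 = (((1 / 5 : ℝ) * (27 * Real.log 3 - 32 * Real.log 2) : ℝ) : ℂ) := by
    simp only [betaFn, zero_div, p0]
    norm_num
  rw [this]
  simp only [bC0, L2, L3]
  push_cast
  ring

lemma pieces_match {γ : ℝ → ℂ} (h2 : ContDiffOn ℝ 2 γ (Ioi 0))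
    {aL bL cL dL aR bR cR dR : ℂ} {u k v : ℝ} (hu : 0 ≤ u) (huk : u < k) (hkv : k < v)
    (hL : ∀ x ∈ Ioo u k, γ x = Pc aL bL cL dL x)
    (hR : ∀ x ∈ Ioo k v, γ x = Pc aR bR cR dR x) :
    Pc aL bL cL dL k = Pc aR bR cR dR k ∧ Pc1 aL bL dL k = Pc1 aR bR dR k ∧
      Pc2 aL bL dL k = Pc2 aR bR dR k := by
  have hk : (0:ℝ) < k := lt_of_le_of_lt hu huk
  have hsubL : Ioo u k ⊆ Ioi 0 := fun x hx => lt_of_le_of_lt hu hx.1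
  have hsubR : Ioo k v ⊆ Ioi 0 := fun x hx => hk.trans hx.1
  obtain ⟨hdγ, -, hc1⟩ :=
    (contDiffOn_succ_iff_deriv_of_isOpen isOpen_Ioi).1
      (by rw [show (2 : WithTop ℕ∞) = 1 + 1 by norm_num] at h2; exact h2)
  obtain ⟨hdγ', -, hc0⟩ :=
    (contDiffOn_succ_iff_deriv_of_isOpen isOpen_Ioi).1
      (by rw [show (1 : WithTop ℕ∞) = 0 + 1 by norm_num] at hc1; exact hc1)
  have hcont2 : ContinuousOn (deriv (deriv γ)) (Ioi 0) := contDiffOn_zero.1 hc0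
  have hγc : ContinuousAt γ k := hdγ.continuousOn.continuousAt (Ioi_mem_nhds hk)
  have hd1c : ContinuousAt (deriv γ) k := hdγ'.continuousOn.continuousAt (Ioi_mem_nhds hk)
  have hd2c : ContinuousAt (deriv (deriv γ)) k := hcont2.continuousAt (Ioi_mem_nhds hk)
  have D1L : ∀ x ∈ Ioo u k, deriv γ x = Pc1 aL bL dL x :=
    deriv_eqOn isOpen_Ioo hL (fun x hx => hasDerivAt_Pc _ _ _ _ (hsubL hx))
  have D1R : ∀ x ∈ Ioo k v, deriv γ x = Pc1 aR bR dR x :=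
    deriv_eqOn isOpen_Ioo hR (fun x hx => hasDerivAt_Pc _ _ _ _ (hsubR hx))
  have D2L : ∀ x ∈ Ioo u k, deriv (deriv γ) x = Pc2 aL bL dL x :=
    deriv_eqOn isOpen_Ioo D1L (fun x hx => hasDerivAt_Pc1 _ _ _ (hsubL hx))
  have D2R : ∀ x ∈ Ioo k v, deriv (deriv γ) x = Pc2 aR bR dR x :=
    deriv_eqOn isOpen_Ioo D1R (fun x hx => hasDerivAt_Pc1 _ _ _ (hsubR hx))
  refine ⟨?_, ?_, ?_⟩
  · rw [← eq_left huk hγc (hasDerivAt_Pc aL bL cL dL hk).continuousAt hL]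
    exact eq_right hkv hγc (hasDerivAt_Pc aR bR cR dR hk).continuousAt hR
  · rw [← eq_left huk hd1c (hasDerivAt_Pc1 aL bL dL hk).continuousAt D1L]
    exact eq_right hkv hd1c (hasDerivAt_Pc1 aR bR dR hk).continuousAt D1R
  · rw [← eq_left huk hd2c (continuousAt_Pc2 aL bL dL hk) D2L]
    exact eq_right hkv hd2c (continuousAt_Pc2 aR bR dR hk) D2R

end S18

end


open Topology S18 in
/-- the profile `β` is a non-singular Beppo Levi `L₀`-spline on the knots
`{1,2,3}` vanishing on `[3,∞)`, and any non-singular Beppo Levi `L₀`-spline on `{1,2,3}`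
vanishing on `[3,∞)` is a constant multiple of `β`. -/
theorem stmt18 :
    (IsBLSpline 3 (fun j => (j : ℝ)) betaFn ∧ NonSingularBLS 1 betaFn ∧
      ∀ x : ℝ, 3 ≤ x → betaFn x = 0) ∧
    (∀ γ : ℝ → ℂ, IsBLSpline 3 (fun j => (j : ℝ)) γ → NonSingularBLS 1 γ →
      (∀ x : ℝ, 3 ≤ x → γ x = 0) →
      ∃ c : ℂ, ∀ x : ℝ, 0 ≤ x → γ x = c * betaFn x) := by
  have hcont0 : ContinuousWithinAt betaFn (Set.Ici 0) 0 := by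
    have hgc : Continuous (fun x : ℝ => bA0 * (x:ℂ)^2 + bC0) :=
      (continuous_const.mul (Complex.continuous_ofReal.pow 2)).add continuous_const
    refine hgc.continuousWithinAt.congr_of_eventuallyEq ?_ (by simp [beta_at_0])
    have h1 : Iio (1:ℝ) ∈ 𝓝[Set.Ici 0] (0:ℝ) :=
      mem_nhdsWithin_of_mem_nhds (Iio_mem_nhds one_pos)
    filter_upwards [h1, self_mem_nhdsWithin] with y hy1 hy0
    rcases eq_or_lt_of_le (mem_Ici.1 hy0) with h|h
    · rw [← h, beta_at_0]; simp
    · rw [beta_on_01 h hy1]; simp [Pc]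
  have hspline : IsBLSpline 3 (fun j => (j : ℝ)) betaFn := by
    refine ⟨?_, ?_, ?_, ?_, hcont0⟩
    · intro j hj1 hj2
      have hj2' : j ≤ 2 := by omega
      interval_cases j
      · refine ⟨bA1, 1, bC1, 1, fun x hx => ?_⟩
        have hx' : (1:ℝ) < x ∧ x < 2 := by
          constructor
          · simpa using hx.1
          · have := hx.2; norm_num at this ⊢; exact this
        rw [beta_on_12 hx'.1 hx'.2]; rfl
      · refine ⟨bA2, bB2, bC2, bD2, fun x hx => ?_⟩
        have hx' : (2:ℝ) < x ∧ x < 3 := by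
          constructor
          · have := hx.1; norm_num at this ⊢; exact this
          · have := hx.2; norm_num at this ⊢; exact this
        rw [beta_on_23 hx'.1 hx'.2]; rfl
    · refine ⟨bA0, 0, bC0, fun x hx => ?_⟩
      have hx' : (0:ℝ) < x ∧ x < 1 := by
        refine ⟨hx.1, by simpa using hx.2⟩
      rw [beta_on_01 hx'.1 hx'.2]; simp [Pc]
    · refine ⟨0, 0, fun x hx => ?_⟩
      have : (3:ℝ) ≤ x := le_of_lt (by simpa using hx)
      rw [beta_on_3 this]; simp
    · exact contDiffOn_betaFn
  have hbns : NonSingularBLS 1 betaFn := by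
    refine ⟨bA0, bC0, fun x hx => ?_⟩
    rw [beta_on_01 hx.1 hx.2]; simp [Pc]
  refine ⟨⟨hspline, hbns, fun x hx => beta_on_3 hx⟩, ?_⟩
  intro γ hsp hns h3
  obtain ⟨a0, c0, h01⟩ := hns
  obtain ⟨a1, b1, c1, d1, h12⟩ := hsp.pieces 1 le_rfl (by norm_num)
  obtain ⟨a2, b2, c2, d2, h23⟩ := hsp.pieces 2 (by norm_num) le_rfl
  have h01' : ∀ x ∈ Ioo (0:ℝ) 1, γ x = Pc a0 0 c0 0 x := by
    intro x hx
    rw [h01 x hx]; simp [Pc]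
  have h12' : ∀ x ∈ Ioo (1:ℝ) 2, γ x = Pc a1 b1 c1 d1 x := by
    intro x hx
    have hx' : x ∈ Ioo ((1:ℕ):ℝ) (((1+1:ℕ)):ℝ) := by
      constructor
      · simpa using hx.1
      · push_cast; exact hx.2
    exact h12 x hx'
  have h23' : ∀ x ∈ Ioo (2:ℝ) 3, γ x = Pc a2 b2 c2 d2 x := by
    intro x hx
    have hx' : x ∈ Ioo ((2:ℕ):ℝ) (((2+1:ℕ)):ℝ) := by
      constructor
      · push_cast; exact hx.1
      · push_cast; exact hx.2
    exact h23 x hx'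
  have h34' : ∀ x ∈ Ioo (3:ℝ) 4, γ x = Pc 0 0 0 0 x := by
    intro x hx
    rw [h3 x hx.1.le]; simp [Pc]
  obtain ⟨E1, E2, E3⟩ := pieces_match hsp.smooth le_rfl one_pos one_lt_two h01' h12'
  obtain ⟨E4, E5, E6⟩ :=
    pieces_match hsp.smooth (by norm_num) one_lt_two (by norm_num : (2:ℝ)<3) h12' h23'
  obtain ⟨E7, E8, E9⟩ :=
    pieces_match hsp.smooth (by norm_num) (by norm_num : (2:ℝ)<3) (by norm_num) h23' h34'
  simp only [Pc, Pc1, Pc2, Complex.ofReal_one, Complex.ofReal_ofNat, Real.log_one,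
    Complex.ofReal_zero, one_pow, mul_one, mul_zero, zero_mul, add_zero, zero_add,
    inv_one] at E1 E2 E3 E4 E5 E6 E7 E8 E9
  have hd1 : d1 = b1 := by linear_combination (E3 - E2)/2
  have hb2 : b2 = -3/5*b1 := by
    linear_combination (-(1:ℂ)/5)*(E5 - 2*E6 - hd1 + (3/2)*(E8 - 3*E9))
  have hd2 : d2 = -27/5*b1 := by
    linear_combination (3/2)*(E8 - 3*E9) + 9*hb2
  have ha2 : a2 = (3*(Real.log 3:ℂ)+3)/5*b1 := by
    linear_combination (1/2)*E9 - ((Real.log 3:ℂ) + 3/2)*hb2 + (1/18)*hd2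
  have hc2 : c2 = (27*(Real.log 3:ℂ)-27)/5*b1 := by
    linear_combination E7 - 9*ha2 - 9*(Real.log 3:ℂ)*hb2 - (Real.log 3:ℂ)*hd2
  have ha1 : a1 = (3*(Real.log 3:ℂ)-8*(Real.log 2:ℂ)-5)/5*b1 := by
    linear_combination (1/2)*E6 + ha2 + ((Real.log 2:ℂ)+3/2)*hb2 + (1/8)*hd1 - (1/8)*hd2
  have hc1 : c1 = (27*(Real.log 3:ℂ)-32*(Real.log 2:ℂ)+5)/5*b1 := by
    linear_combination E4 - 4*ha1 + 4*ha2 + 4*(Real.log 2:ℂ)*hb2 + hc2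
      + (Real.log 2:ℂ)*hd2 - (Real.log 2:ℂ)*hd1
  have ha0 : a0 = (3*(Real.log 3:ℂ)-8*(Real.log 2:ℂ))/5*b1 := by
    linear_combination (1/2)*E2 + ha1 + (1/2)*hd1
  have hc0 : c0 = (27*(Real.log 3:ℂ)-32*(Real.log 2:ℂ))/5*b1 := by
    linear_combination E1 - ha0 + ha1 + hc1
  -- region identities
  have heq01 : ∀ x ∈ Ioo (0:ℝ) 1, γ x = b1 * betaFn x := by
    intro x hx
    rw [h01' x hx, beta_on_01 hx.1 hx.2]
    simp only [Pc, bA0, bC0, L2, L3]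
    linear_combination (x:ℂ)^2*ha0 + hc0
  have heq12 : ∀ x ∈ Ioo (1:ℝ) 2, γ x = b1 * betaFn x := by
    intro x hx
    rw [h12' x hx, beta_on_12 hx.1 hx.2]
    simp only [Pc, bA1, bC1, L2, L3]
    linear_combination (x:ℂ)^2*ha1 + hc1 + ((Real.log x:ℝ):ℂ)*hd1
  have heq23 : ∀ x ∈ Ioo (2:ℝ) 3, γ x = b1 * betaFn x := by
    intro x hx
    rw [h23' x hx, beta_on_23 hx.1 hx.2]
    simp only [Pc, bA2, bB2, bC2, bD2, L2, L3]
    linear_combination (x:ℂ)^2*ha2 + ((x:ℂ)^2*((Real.log x:ℝ):ℂ))*hb2 + hc2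
      + ((Real.log x:ℝ):ℂ)*hd2
  have hγcont : ContinuousOn γ (Ioi 0) := hsp.smooth.continuousOn
  have hβcont : ContinuousOn betaFn (Ioi 0) := contDiffOn_betaFn.continuousOn
  refine ⟨b1, fun x hx => ?_⟩
  rcases eq_or_lt_of_le hx with h0|h0
  · -- x = 0
    have hgc : Continuous (fun y : ℝ => a0 * (y:ℂ)^2 + c0) :=
      (continuous_const.mul (Complex.continuous_ofReal.pow 2)).add continuous_const
    have htg : Tendsto γ (𝓝[>] (0:ℝ)) (𝓝 (γ 0)) :=
      hsp.cont0.tendsto.mono_left (nhdsWithin_mono 0 Ioi_subset_Ici_self)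
    have htp : Tendsto (fun y : ℝ => a0 * (y:ℂ)^2 + c0) (𝓝[>] (0:ℝ)) (𝓝 c0) := by
      have := (hgc.tendsto 0).mono_left (nhdsWithin_le_nhds (s := Ioi (0:ℝ)))
      simpa using this
    have hev : γ =ᶠ[𝓝[>] (0:ℝ)] fun y : ℝ => a0 * (y:ℂ)^2 + c0 := by
      filter_upwards [Ioo_mem_nhdsGT_of_mem ⟨le_rfl, one_pos⟩] with y hy
      exact h01 y hy
    have hγ0 : γ 0 = c0 := tendsto_nhds_unique (htg.congr' hev) htp
    rw [← h0, hγ0, beta_at_0]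
    simp only [bC0, L2, L3]
    linear_combination hc0
  · rcases lt_trichotomy x 1 with h1|h1|h1
    · exact heq01 x ⟨h0, h1⟩
    · subst h1
      exact eq_left one_pos (hγcont.continuousAt (Ioi_mem_nhds one_pos))
        (continuousAt_const.mul (hβcont.continuousAt (Ioi_mem_nhds one_pos)))
        heq01
    · rcases lt_trichotomy x 2 with h2|h2|h2
      · exact heq12 x ⟨h1, h2⟩
      · subst h2
        exact eq_left one_lt_two (hγcont.continuousAt (Ioi_mem_nhds two_pos))
          (continuousAt_const.mul (hβcont.continuousAt (Ioi_mem_nhds two_pos)))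
          heq12
      · rcases lt_trichotomy x 3 with h3'|h3'|h3'
        · exact heq23 x ⟨h2, h3'⟩
        · rw [h3 x h3'.ge, beta_on_3 h3'.ge]
          ring
        · rw [h3 x h3'.le, beta_on_3 h3'.le]
          ring
end
end

section
/- Minimality of the support of compactly supported Beppo Levi L₀-splines: (a) every Beppo Levi L₀-spline on the single knot set ρ = {1} that vanishes identically on [1,∞) is identically zero on [0,∞); (b) every non-singular Beppo Levi L₀-spline on the knot set ρ = {1,2} that vanishes identically on [2,∞) is identically zero on [0,∞). -/
open MeasureTheory Set Filter

noncomputable section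

open Topology

namespace Stmt19Aux

def P (a b c d : ℂ) (x : ℝ) : ℂ :=
  a * (x : ℂ) ^ 2 + b * (x : ℂ) ^ 2 * (Real.log x : ℂ) + c + d * (Real.log x : ℂ)

def P1 (a b d : ℂ) (x : ℝ) : ℂ :=
  a * (2 * (x : ℂ)) + b * (2 * (x : ℂ) * (Real.log x : ℂ) + (x : ℂ)) + d * ((x : ℂ))⁻¹

def P2 (a b d : ℂ) (x : ℝ) : ℂ :=
  2 * a + b * (2 * (Real.log x : ℂ) + 3) - d / (x : ℂ) ^ 2

lemma hasDerivAt_P (a b c d : ℂ) {x : ℝ} (hx : 0 < x) :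
    HasDerivAt (P a b c d) (P1 a b d x) x := by
  have hx0 : x ≠ 0 := ne_of_gt hx
  have hxC : (x : ℂ) ≠ 0 := Complex.ofReal_ne_zero.mpr hx0
  have hid : HasDerivAt (fun y : ℝ => (y : ℂ)) 1 x := by
    simpa using (hasDerivAt_id x).ofReal_comp
  have hlog : HasDerivAt (fun y : ℝ => ((Real.log y : ℝ) : ℂ)) ((x⁻¹ : ℝ) : ℂ) x :=
    (Real.hasDerivAt_log hx0).ofReal_comp
  have hsq : HasDerivAt (fun y : ℝ => ((y : ℂ)) ^ 2) (2 * (x : ℂ)) x := by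
    simpa using (hasDerivAt_pow 2 ((x : ℂ))).comp_ofReal
  have h := (((hsq.const_mul a).add ((hsq.const_mul b).mul hlog)).add_const c).add
    (hlog.const_mul d)
  refine HasDerivAt.congr_deriv (f := P a b c d) h ?_
  simp only [P1]
  push_cast
  field_simp

lemma hasDerivAt_P1 (a b d : ℂ) {x : ℝ} (hx : 0 < x) :
    HasDerivAt (P1 a b d) (P2 a b d x) x := by
  have hx0 : x ≠ 0 := ne_of_gt hx
  have hxC : (x : ℂ) ≠ 0 := Complex.ofReal_ne_zero.mpr hx0
  have hid : HasDerivAt (fun y : ℝ => (y : ℂ)) 1 x := by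
    simpa using (hasDerivAt_id x).ofReal_comp
  have hlog : HasDerivAt (fun y : ℝ => ((Real.log y : ℝ) : ℂ)) ((x⁻¹ : ℝ) : ℂ) x :=
    (Real.hasDerivAt_log hx0).ofReal_comp
  have hinv : HasDerivAt (fun y : ℝ => ((y : ℂ))⁻¹) (-(((x : ℂ)) ^ 2)⁻¹) x :=
    (hasDerivAt_inv hxC).comp_ofReal
  have h := ((((hid.const_mul 2).const_mul a).add
    ((((hid.const_mul 2).mul hlog).add hid).const_mul b)).add
    (hinv.const_mul d))
  refine HasDerivAt.congr_deriv (f := P1 a b d) h ?_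
  simp only [P2]
  push_cast
  field_simp
  ring

lemma continuousAt_P2 (a b d : ℂ) {x : ℝ} (hx : 0 < x) : ContinuousAt (P2 a b d) x := by
  have hxC : ((x : ℂ)) ^ 2 ≠ 0 := pow_ne_zero _ (Complex.ofReal_ne_zero.mpr (ne_of_gt hx))
  have hlg : ContinuousAt (fun y : ℝ => ((Real.log y : ℝ) : ℂ)) x :=
    Complex.continuous_ofReal.continuousAt.comp (Real.continuousAt_log (ne_of_gt hx))
  have hco : ContinuousAt (fun y : ℝ => ((y : ℂ)) ^ 2) x :=
    (Complex.continuous_ofReal.continuousAt).pow 2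
  exact (continuousAt_const.add (continuousAt_const.mul
    ((continuousAt_const.mul hlg).add continuousAt_const))).sub
    (continuousAt_const.div hco hxC)

lemma match_left (F G : ℝ → ℂ) {l x₀ : ℝ} (hlx : l < x₀) (hF : ContinuousAt F x₀)
    (hG : ContinuousAt G x₀) (h : ∀ x ∈ Set.Ioo l x₀, F x = G x) : F x₀ = G x₀ := by
  have hmem : Set.Ioo l x₀ ∈ 𝓝[<] x₀ := Ioo_mem_nhdsLT_of_mem ⟨hlx, le_refl x₀⟩
  have t1 : Tendsto F (𝓝[<] x₀) (𝓝 (F x₀)) := hF.tendsto.mono_left nhdsWithin_le_nhds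
  have t2 : Tendsto F (𝓝[<] x₀) (𝓝 (G x₀)) := by
    refine (hG.tendsto.mono_left nhdsWithin_le_nhds).congr' ?_
    filter_upwards [hmem] with x hx
    exact (h x hx).symm
  exact tendsto_nhds_unique t1 t2

lemma match_right (F G : ℝ → ℂ) {x₀ u : ℝ} (hxu : x₀ < u) (hF : ContinuousAt F x₀)
    (hG : ContinuousAt G x₀) (h : ∀ x ∈ Set.Ioo x₀ u, F x = G x) : F x₀ = G x₀ := by
  have hmem : Set.Ioo x₀ u ∈ 𝓝[>] x₀ := Ioo_mem_nhdsGT_of_mem ⟨le_refl x₀, hxu⟩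
  have t1 : Tendsto F (𝓝[>] x₀) (𝓝 (F x₀)) := hF.tendsto.mono_left nhdsWithin_le_nhds
  have t2 : Tendsto F (𝓝[>] x₀) (𝓝 (G x₀)) := by
    refine (hG.tendsto.mono_left nhdsWithin_le_nhds).congr' ?_
    filter_upwards [hmem] with x hx
    exact (h x hx).symm
  exact tendsto_nhds_unique t1 t2

lemma deriv_on_piece (η : ℝ → ℂ) {p q : ℝ} (hp : 0 ≤ p) (a b c d : ℂ)
    (h : ∀ x ∈ Set.Ioo p q, η x = P a b c d x) :
    (∀ x ∈ Set.Ioo p q, deriv η x = P1 a b d x) ∧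
    (∀ x ∈ Set.Ioo p q, deriv (deriv η) x = P2 a b d x) := by
  have h1 : ∀ x ∈ Set.Ioo p q, deriv η x = P1 a b d x := by
    intro x hx
    have hev : η =ᶠ[𝓝 x] P a b c d := Filter.eventuallyEq_of_mem (isOpen_Ioo.mem_nhds hx) h
    rw [hev.deriv_eq]
    exact (hasDerivAt_P a b c d (lt_of_le_of_lt hp hx.1)).deriv
  refine ⟨h1, ?_⟩
  intro x hx
  have hev : deriv η =ᶠ[𝓝 x] P1 a b d := Filter.eventuallyEq_of_mem (isOpen_Ioo.mem_nhds hx) h1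
  rw [hev.deriv_eq]
  exact (hasDerivAt_P1 a b d (lt_of_le_of_lt hp hx.1)).deriv

lemma glue (η : ℝ → ℂ) (hsm : ContDiffOn ℝ 2 η (Set.Ioi 0))
    {l x₀ u : ℝ} (hl : 0 ≤ l) (hlx : l < x₀) (hxu : x₀ < u)
    (a b c d a' b' c' d' : ℂ)
    (hL : ∀ x ∈ Set.Ioo l x₀, η x = P a b c d x)
    (hR : ∀ x ∈ Set.Ioo x₀ u, η x = P a' b' c' d' x) :
    η x₀ = P a b c d x₀ ∧ P a b c d x₀ = P a' b' c' d' x₀ ∧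
      P1 a b d x₀ = P1 a' b' d' x₀ ∧ P2 a b d x₀ = P2 a' b' d' x₀ := by
  have hx0 : 0 < x₀ := lt_of_le_of_lt hl hlx
  have hmem : Set.Ioi (0 : ℝ) ∈ 𝓝 x₀ := Ioi_mem_nhds hx0
  have hηc : ContinuousAt η x₀ := hsm.continuousOn.continuousAt hmem
  have hD1cd : ContDiffOn ℝ 1 (deriv η) (Set.Ioi 0) :=
    hsm.deriv_of_isOpen (m := 1) isOpen_Ioi (by norm_num)
  have hD1c : ContinuousAt (deriv η) x₀ := hD1cd.continuousOn.continuousAt hmem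
  have hD2c : ContinuousAt (deriv (deriv η)) x₀ :=
    ((hD1cd.deriv_of_isOpen (m := 0) isOpen_Ioi (by norm_num)).continuousOn).continuousAt hmem
  obtain ⟨hdL1, hdL2⟩ := deriv_on_piece η hl a b c d hL
  obtain ⟨hdR1, hdR2⟩ := deriv_on_piece η (le_of_lt hx0) a' b' c' d' hR
  have e0L : η x₀ = P a b c d x₀ :=
    match_left η _ hlx hηc (hasDerivAt_P a b c d hx0).continuousAt hL
  have e0R : η x₀ = P a' b' c' d' x₀ :=
    match_right η _ hxu hηc (hasDerivAt_P a' b' c' d' hx0).continuousAt hR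
  have e1L := match_left (deriv η) _ hlx hD1c (hasDerivAt_P1 a b d hx0).continuousAt hdL1
  have e1R := match_right (deriv η) _ hxu hD1c (hasDerivAt_P1 a' b' d' hx0).continuousAt hdR1
  have e2L := match_left (deriv (deriv η)) _ hlx hD2c (continuousAt_P2 a b d hx0) hdL2
  have e2R := match_right (deriv (deriv η)) _ hxu hD2c (continuousAt_P2 a' b' d' hx0) hdR2
  exact ⟨e0L, e0L.symm.trans e0R, e1L.symm.trans e1R, e2L.symm.trans e2R⟩

lemma zero_at_zero (η : ℝ → ℂ) (h0 : ContinuousWithinAt η (Set.Ici 0) 0)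
    (hz : ∀ x : ℝ, 0 < x → η x = 0) : η 0 = 0 := by
  have t1 : Tendsto η (𝓝[>] (0 : ℝ)) (𝓝 (η 0)) :=
    h0.tendsto.mono_left (nhdsWithin_mono _ Set.Ioi_subset_Ici_self)
  have t2 : Tendsto η (𝓝[>] (0 : ℝ)) (𝓝 0) := by
    refine Tendsto.congr' ?_ tendsto_const_nhds
    filter_upwards [self_mem_nhdsWithin] with x hx
    exact (hz x hx).symm
  exact tendsto_nhds_unique t1 t2

end Stmt19Aux

open Stmt19Aux in
/-- minimality of supports: (a) a Beppo Levi `L₀`-spline on the single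
knot `{1}` vanishing on `[1,∞)` vanishes identically on `[0,∞)`; (b) a non-singular
Beppo Levi `L₀`-spline on the knots `{1,2}` vanishing on `[2,∞)` vanishes identically
on `[0,∞)`. -/
theorem stmt19 :
    (∀ η : ℝ → ℂ, IsBLSpline 1 (fun j => (j : ℝ)) η →
      (∀ x : ℝ, 1 ≤ x → η x = 0) → ∀ x : ℝ, 0 ≤ x → η x = 0) ∧
    (∀ η : ℝ → ℂ, IsBLSpline 2 (fun j => (j : ℝ)) η → NonSingularBLS 1 η →
      (∀ x : ℝ, 2 ≤ x → η x = 0) → ∀ x : ℝ, 0 ≤ x → η x = 0) := by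
  have hdummy : True := trivial
  constructor
  · intro η hS hv
    obtain ⟨a, b, c, hLf⟩ := hS.left
    have hL : ∀ y ∈ Set.Ioo (0:ℝ) 1, η y = P a b c 0 y := by
      intro y hy
      rw [hLf y (by simpa using hy)]
      simp [P]
    have hR : ∀ y ∈ Set.Ioo (1:ℝ) 2, η y = P 0 0 0 0 y := by
      intro y hy
      rw [hv y (le_of_lt hy.1)]
      simp [P]
    obtain ⟨h0, h1, h2, h3⟩ :=
      glue η hS.smooth (le_refl 0) one_pos one_lt_two a b c 0 0 0 0 0 hL hR
    simp only [P, P1, P2, Real.log_one, Complex.ofReal_zero, Complex.ofReal_one]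
      at h1 h2 h3
    have hb : b = 0 := by linear_combination (h3 - h2) / 2
    have ha : a = 0 := by linear_combination h2 / 2 - hb / 2
    have hc : c = 0 := by linear_combination h1 - ha
    have hz : ∀ y : ℝ, 0 < y → η y = 0 := by
      intro y hy
      rcases lt_or_ge y 1 with h | h
      · rw [hL y ⟨hy, h⟩, ha, hb, hc]; simp [P]
      · exact hv y h
    intro x hx
    rcases hx.eq_or_lt with h | h
    · rw [← h]; exact zero_at_zero η hS.cont0 hz
    · exact hz x h
  · intro η hS hNS hv
    obtain ⟨a, c, hLf⟩ := hNS
    have hL : ∀ y ∈ Set.Ioo (0:ℝ) 1, η y = P a 0 c 0 y := by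
      intro y hy
      rw [hLf y hy]
      simp [P]
    obtain ⟨A, B, C, D, hMf⟩ := hS.pieces 1 le_rfl (by norm_num)
    have hM : ∀ y ∈ Set.Ioo (1:ℝ) 2, η y = P A B C D y := by
      intro y hy
      exact hMf y (by simpa using hy)
    have hR : ∀ y ∈ Set.Ioo (2:ℝ) 3, η y = P 0 0 0 0 y := by
      intro y hy
      rw [hv y (le_of_lt hy.1)]
      simp [P]
    obtain ⟨g10, g11, g12, g13⟩ :=
      glue η hS.smooth (le_refl 0) one_pos one_lt_two a 0 c 0 A B C D hL hM
    obtain ⟨g20, g21, g22, g23⟩ :=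
      glue η hS.smooth zero_le_one one_lt_two (by norm_num : (2:ℝ) < 3) A B C D 0 0 0 0 hM hR
    simp only [P, P1, P2, Real.log_one, Complex.ofReal_zero, Complex.ofReal_one,
      Complex.ofReal_ofNat] at g10 g11 g12 g13 g21 g22 g23
    have hBD : B = D := by linear_combination (g12 - g13) / 2
    have hB : B = 0 := by linear_combination (2 * g23 - g22) / 3 - hBD / 3
    have hD : D = 0 := by linear_combination hB - hBD
    have hA : A = 0 := by
      linear_combination g22 / 4 - (((Real.log 2 : ℝ) : ℂ) + 1 / 2) * hB - hD / 8
    have hC : C = 0 := by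
      linear_combination g21 - 4 * hA - (4 * ((Real.log 2 : ℝ) : ℂ)) * hB
        - ((Real.log 2 : ℝ) : ℂ) * hD
    have ha : a = 0 := by linear_combination g12 / 2 + hA + hB / 2 + hD / 2
    have hc : c = 0 := by linear_combination g11 - ha + hA + hC
    have hz : ∀ y : ℝ, 0 < y → η y = 0 := by
      intro y hy
      rcases lt_trichotomy y 1 with h | h | h
      · rw [hL y ⟨hy, h⟩, ha, hc]; simp [P]
      · rw [h, g10, ha, hc]; ring
      · rcases lt_trichotomy y 2 with h2 | h2 | h2
        · rw [hM y ⟨h, h2⟩, hA, hB, hC, hD]; simp [P]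
        · exact hv y (le_of_eq h2.symm)
        · exact hv y (le_of_lt h2)
    intro x hx
    rcases hx.eq_or_lt with h | h
    · rw [← h]; exact zero_at_zero η hS.cont0 hz
    · exact hz x h
end
end
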